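/- arXiv:1401.7085 — 6 statements merged into one kernel-verified Lean document; each statement's English description precedes it below -/
import Mathlib

section
/- Let C be an a×b matrix with entries in {0,1}, let q be a prime power, and let 𝒰 be a finite collection of submatrices of C (each specified by a choice of row indices and column indices). If q > |𝒰|·a·b, then there exists a matrix C̄ ∈ F_q^{a×b} such that (1) C̄ conforms to C, i.e. C̄_{ij} = 0 whenever C_{ij} = 0, and (2) for every U ∈ 𝒰, say of size m×n, the corresponding submatrix Ū of C̄ satisfies rank(Ū) = max{ rank(V) : V ∈ F_q^{m×n}, V conforms to U }. That is, every submatrix in 𝒰 is simultaneously rank-maximized subject to the zero pattern of C. -/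
open Matrix MvPolynomial

section SchwartzZippel

private lemma sz_fin {R : Type*} [CommRing R] [IsDomain R] [Fintype R] :
    ∀ {N : ℕ} (P : MvPolynomial (Fin N) R), P ≠ 0 →
      P.totalDegree < Fintype.card R → ∃ r, eval r P ≠ 0 := by
  intro N
  induction N with
  | zero =>
    intro P hP _
    refine ⟨0, ?_⟩
    contrapose! hP
    ext d
    simpa only [Subsingleton.elim d 0, eval_zero, coeff_zero, constantCoeff_eq] using hP
  | succ N IH =>
    intro P hP hdeg
    set φ := finSuccEquiv R N P with hφdef
    have hφ : φ ≠ 0 := fun h => hP <| by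
      simpa using (finSuccEquiv R N).injective (h.trans (map_zero _).symm)
    have hcoeff : φ.coeff φ.natDegree ≠ 0 := Polynomial.leadingCoeff_ne_zero.mpr hφ
    have hcd : (φ.coeff φ.natDegree).totalDegree < Fintype.card R := by
      refine lt_of_le_of_lt ?_ hdeg
      have h2 := totalDegree_coeff_finSuccEquiv_add_le P φ.natDegree hcoeff
      rw [← hφdef] at h2
      omega
    obtain ⟨r, hr⟩ := IH _ hcoeff hcd
    set ψ : Polynomial R := φ.map (eval r) with hψdef
    have hψ : ψ ≠ 0 := fun h => hr <| by
      rw [← MvPolynomial.coeff_eval_eq_eval_coeff, ← hψdef, h, Polynomial.coeff_zero]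
    have hψdeg : (ψ.natDegree : Cardinal) < Cardinal.mk R := by
      rw [Cardinal.mk_fintype, Nat.cast_lt]
      refine lt_of_le_of_lt (Polynomial.natDegree_map_le : ψ.natDegree ≤ φ.natDegree) ?_
      calc φ.natDegree = P.degreeOf 0 := natDegree_finSuccEquiv P
        _ ≤ P.totalDegree := degreeOf_le_totalDegree P 0
        _ < Fintype.card R := hdeg
    obtain ⟨r₀, hr₀⟩ := ψ.exists_eval_ne_zero_of_natDegree_lt_card hψ hψdeg
    refine ⟨Fin.cons r₀ r, ?_⟩
    rwa [eval_eq_eval_mv_eval']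

private lemma sz_general {σ R : Type*} [Fintype σ] [CommRing R] [IsDomain R] [Fintype R]
    (P : MvPolynomial σ R) (hP : P ≠ 0) (hdeg : P.totalDegree < Fintype.card R) :
    ∃ r : σ → R, eval r P ≠ 0 := by
  let e := Fintype.equivFin σ
  have h0 : rename e P ≠ 0 := fun h => hP <| by
    simpa using (renameEquiv R e).injective (by simpa [renameEquiv] using h)
  have hd : (rename e P).totalDegree < Fintype.card R :=
    lt_of_le_of_lt (totalDegree_rename_le _ _) hdeg
  obtain ⟨r, hr⟩ := sz_fin _ h0 hd
  exact ⟨r ∘ e, by rwa [eval_rename] at hr⟩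

end SchwartzZippel

section RankLemmas

private lemma rank_submatrix_cols_le {K : Type*} [Field K] {m n o : Type*}
    [Fintype m] [Fintype n] [Fintype o]
    (A : Matrix m n K) (σ : o → n) : (A.submatrix id σ).rank ≤ A.rank := by
  rw [Matrix.rank_eq_finrank_span_cols, Matrix.rank_eq_finrank_span_cols]
  apply Submodule.finrank_mono
  apply Submodule.span_mono
  rintro _ ⟨j, rfl⟩
  exact ⟨σ j, rfl⟩

private lemma rank_submatrix_rows_le {K : Type*} [Field K] {m n l : Type*}
    [Fintype m] [Fintype n] [Fintype l]
    (A : Matrix m n K) (ρ : l → m) : (A.submatrix ρ id).rank ≤ A.rank := by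
  rw [Matrix.rank_eq_finrank_span_row, Matrix.rank_eq_finrank_span_row]
  apply Submodule.finrank_mono
  apply Submodule.span_mono
  rintro _ ⟨i, rfl⟩
  exact ⟨ρ i, rfl⟩

/-- Rank of any submatrix is at most the rank (over a field). -/
private lemma rank_submatrix_le_general {K : Type*} [Field K] {m n l o : Type*}
    [Fintype m] [Fintype n] [Fintype l] [Fintype o]
    (M : Matrix m n K) (ρ : l → m) (σ : o → n) :
    (M.submatrix ρ σ).rank ≤ M.rank := by
  calc (M.submatrix ρ σ).rank = ((M.submatrix ρ id).submatrix id σ).rank := by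
        rw [submatrix_submatrix]; rfl
    _ ≤ (M.submatrix ρ id).rank := rank_submatrix_cols_le _ _
    _ ≤ M.rank := rank_submatrix_rows_le _ _

/-- One can select `rank` many rows of a matrix that are linearly independent. -/
private lemma exists_rows_linearIndependent {K : Type*} [Field K] {m n : Type*}
    [Fintype m] [Fintype n] (M : Matrix m n K) :
    ∃ ρ : Fin M.rank → m, LinearIndependent K (fun k => M (ρ k)) := by
  classical
  obtain ⟨t, hts, hsp, hli⟩ := exists_linearIndependent K (Set.range M)
  have htfin : t.Finite := (Set.finite_range M).subset hts
  haveI := htfin.fintype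
  have hcard : Fintype.card t = M.rank := by
    rw [M.rank_eq_finrank_span_row, Matrix.row, ← hsp, finrank_span_set_eq_card hli,
      Set.toFinset_card]
  let e : Fin M.rank ≃ t := (Fintype.equivFinOfCardEq hcard).symm
  have hch : ∀ x : t, ∃ i, M i = (x : n → K) := fun x => hts x.2
  choose f hf using hch
  refine ⟨fun k => f (e k), ?_⟩
  have : (fun k => M (f (e k))) = fun k => ((e k : n → K)) :=
    funext fun k => hf (e k)
  rw [this]
  exact hli.comp e e.injective

/-- A matrix of rank `r` has an invertible `r × r` submatrix. -/
private lemma exists_det_submatrix_ne_zero {K : Type*} [Field K] {m n : Type*}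
    [Fintype m] [Fintype n] [DecidableEq m] [DecidableEq n] (M : Matrix m n K) :
    ∃ (ρ : Fin M.rank → m) (σ : Fin M.rank → n), (M.submatrix ρ σ).det ≠ 0 := by
  classical
  obtain ⟨ρ, hρ⟩ := exists_rows_linearIndependent M
  set M₁ : Matrix (Fin M.rank) n K := M.submatrix ρ id with hM₁
  have h1 : M₁.rank = M.rank := by
    have := hρ.rank_matrix (M := M₁)
    simpa using this
  have h2 : M₁ᵀ.rank = M.rank := by rw [rank_transpose, h1]
  obtain ⟨σ', hσ'⟩ := exists_rows_linearIndependent M₁ᵀ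
  let σ : Fin M.rank → n := fun k => σ' (Fin.cast h2.symm k)
  have hσ : LinearIndependent K (fun k : Fin M.rank => M₁ᵀ (σ k)) :=
    hσ'.comp (fun k => Fin.cast h2.symm k) fun x y hxy => by
      simpa using (Fin.cast_injective h2.symm) hxy
  have hsq : (fun k : Fin M.rank => M₁ᵀ (σ k)) = fun k => (M.submatrix ρ σ)ᵀ k := by
    funext k j
    rfl
  rw [hsq] at hσ
  have hunit : IsUnit (M.submatrix ρ σ)ᵀ := linearIndependent_rows_iff_isUnit.mp hσ
  have hdet : IsUnit (M.submatrix ρ σ)ᵀ.det := (isUnit_iff_isUnit_det _).mp hunit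
  rw [det_transpose] at hdet
  exact ⟨ρ, σ, hdet.ne_zero⟩

/-- If some `r × r` submatrix has nonzero determinant, the rank is at least `r`. -/
private lemma le_rank_of_det_submatrix_ne_zero {K : Type*} [Field K] {m n : Type*}
    [Fintype m] [Fintype n] {r : ℕ}
    (M : Matrix m n K) (ρ : Fin r → m) (σ : Fin r → n)
    (h : (M.submatrix ρ σ).det ≠ 0) : r ≤ M.rank := by
  classical
  have hunit : IsUnit (M.submatrix ρ σ) := (isUnit_iff_isUnit_det _).mpr h.isUnit
  have := rank_of_isUnit _ hunit
  calc r = (M.submatrix ρ σ).rank := by rw [this, Fintype.card_fin]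
    _ ≤ M.rank := rank_submatrix_le_general M ρ σ

end RankLemmas

private lemma totalDegree_det_le {σ R : Type*} {n : Type*} [CommRing R]
    [DecidableEq n] [Fintype n] (M : Matrix n n (MvPolynomial σ R))
    (h : ∀ i j, (M i j).totalDegree ≤ 1) :
    M.det.totalDegree ≤ Fintype.card n := by
  rw [Matrix.det_apply]
  refine le_trans (totalDegree_finset_sum _ _) ?_
  refine Finset.sup_le fun π _ => ?_
  refine le_trans (totalDegree_smul_le _ _) ?_
  refine le_trans (totalDegree_finset_prod _ _) ?_
  calc ∑ i, (M (π i) i).totalDegree ≤ ∑ _i : n, 1 :=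
        Finset.sum_le_sum fun i _ => h (π i) i
    _ = Fintype.card n := by simp

/-- A matrix `V` over a type with a zero *conforms* to a 0-1 matrix `C`
(encoded as a `Bool`-valued matrix) if `V i j = 0` whenever `C i j = 0`. -/
def Conforms {m n F : Type*} [Zero F]
    (V : Matrix m n F) (C : Matrix m n Bool) : Prop :=
  ∀ i j, C i j = false → V i j = 0

/-- **Lemma 1 (rank-maximizing completion).**
Let `C` be an `a × b` 0-1 matrix, `q` a prime power (realized as the cardinality
of a finite field `F`), and `𝒰` a finite collection of submatrices of `C`, each
given by a set of row indices and a set of column indices.  If `q > |𝒰|·a·b`,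
then there is a matrix `C̄ ∈ F^{a×b}` conforming to `C` such that for every
`U ∈ 𝒰` the corresponding submatrix `Ū` of `C̄` has rank equal to the maximum
rank of all matrices conforming to `U`. -/
theorem rank_maximizing_completion
    {a b q : ℕ} (F : Type) [Field F] [Fintype F]
    (hFq : Fintype.card F = q)
    (C : Matrix (Fin a) (Fin b) Bool)
    (𝒰 : Finset (Finset (Fin a) × Finset (Fin b)))
    (hq : 𝒰.card * a * b < q) :
    ∃ Cbar : Matrix (Fin a) (Fin b) F,
      Conforms Cbar C ∧
      ∀ U ∈ 𝒰,
        IsGreatest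
          {r : ℕ | ∃ V : Matrix ↥U.1 ↥U.2 F,
              Conforms V (C.submatrix (Subtype.val : ↥U.1 → Fin a)
                (Subtype.val : ↥U.2 → Fin b)) ∧ V.rank = r}
          ((Cbar.submatrix (Subtype.val : ↥U.1 → Fin a)
            (Subtype.val : ↥U.2 → Fin b)).rank) := by
  classical
  -- the generic matrix with indeterminate entries at the support of `C`
  let X : Matrix (Fin a) (Fin b) (MvPolynomial (Fin a × Fin b) F) :=
    Matrix.of fun i j => if C i j then MvPolynomial.X (i, j) else 0
  have key : ∀ U : Finset (Fin a) × Finset (Fin b),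
      ∃ (r : ℕ) (p : MvPolynomial (Fin a × Fin b) F),
        IsGreatest {r : ℕ | ∃ V : Matrix ↥U.1 ↥U.2 F,
            Conforms V (C.submatrix (Subtype.val : ↥U.1 → Fin a)
              (Subtype.val : ↥U.2 → Fin b)) ∧ V.rank = r} r ∧
        p ≠ 0 ∧ p.totalDegree ≤ a * b ∧
        ∀ x : Fin a × Fin b → F, MvPolynomial.eval x p ≠ 0 →
          r ≤ (((Matrix.of fun i j => if C i j then x (i, j) else 0 :
                  Matrix (Fin a) (Fin b) F)).submatrix
                (Subtype.val : ↥U.1 → Fin a) (Subtype.val : ↥U.2 → Fin b)).rank := by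
    intro U
    set S := {r : ℕ | ∃ V : Matrix ↥U.1 ↥U.2 F,
        Conforms V (C.submatrix (Subtype.val : ↥U.1 → Fin a)
          (Subtype.val : ↥U.2 → Fin b)) ∧ V.rank = r} with hSdef
    have h0S : 0 ∈ S := ⟨0, fun i j _ => rfl, Matrix.rank_zero⟩
    have hbdd : BddAbove S := by
      refine ⟨b, ?_⟩
      rintro r ⟨V, -, rfl⟩
      calc V.rank ≤ Fintype.card ↥U.2 := V.rank_le_card_width
        _ = U.2.card := Fintype.card_coe _
        _ ≤ b := by simpa using Finset.card_le_univ U.2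
    have hgr : IsGreatest S (sSup S) :=
      ⟨Nat.sSup_mem ⟨0, h0S⟩ hbdd, fun r hr => le_csSup hbdd hr⟩
    obtain ⟨V, hVconf, hVrank⟩ := hgr.1
    obtain ⟨ρ, σ, hdet⟩ := exists_det_submatrix_ne_zero V
    refine ⟨V.rank,
      (X.submatrix (fun k => ((ρ k : ↥U.1) : Fin a))
        (fun k => ((σ k : ↥U.2) : Fin b))).det,
      by rw [hVrank]; exact hgr, ?_, ?_, ?_⟩
    · -- nonzeroness via evaluation at an extension of `V`
      intro hp0
      apply hdet
      let y : Fin a × Fin b → F := fun ij =>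
        if h : ij.1 ∈ U.1 ∧ ij.2 ∈ U.2 then V ⟨ij.1, h.1⟩ ⟨ij.2, h.2⟩ else 0
      have heval : MvPolynomial.eval y
          (X.submatrix (fun k => ((ρ k : ↥U.1) : Fin a))
            (fun k => ((σ k : ↥U.2) : Fin b))).det = (V.submatrix ρ σ).det := by
        rw [RingHom.map_det]
        congr 1
        ext k l
        show MvPolynomial.eval y (X ((ρ k : ↥U.1) : Fin a) ((σ l : ↥U.2) : Fin b))
          = V (ρ k) (σ l)
        by_cases hC : C ((ρ k : ↥U.1) : Fin a) ((σ l : ↥U.2) : Fin b)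
        · simp only [X, Matrix.of_apply, if_pos hC, MvPolynomial.eval_X]
          have hmem : ((ρ k : ↥U.1) : Fin a) ∈ U.1 ∧ ((σ l : ↥U.2) : Fin b) ∈ U.2 :=
            ⟨(ρ k).2, (σ l).2⟩
          simp only [y, dif_pos hmem]
        · simp only [X, Matrix.of_apply, if_neg hC, map_zero]
          exact (hVconf (ρ k) (σ l) (by simpa using Bool.eq_false_iff.mpr hC)).symm
      rw [← heval, hp0, map_zero]
    · -- degree bound
      have hdeg : (X.submatrix (fun k => ((ρ k : ↥U.1) : Fin a))
          (fun k => ((σ k : ↥U.2) : Fin b))).det.totalDegree ≤ V.rank := by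
        refine le_trans (totalDegree_det_le _ fun k l => ?_) (by simp)
        show (if C ((ρ k : ↥U.1) : Fin a) ((σ l : ↥U.2) : Fin b) then
            MvPolynomial.X (((ρ k : ↥U.1) : Fin a), ((σ l : ↥U.2) : Fin b)) else
            (0 : MvPolynomial (Fin a × Fin b) F)).totalDegree ≤ 1
        split
        · simp [MvPolynomial.totalDegree_X]
        · simp
      refine le_trans hdeg ?_
      have hra : V.rank ≤ a := by
        calc V.rank ≤ Fintype.card ↥U.1 := V.rank_le_card_height
          _ = U.1.card := Fintype.card_coe _
          _ ≤ a := by simpa using Finset.card_le_univ U.1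
      have hrb : V.rank ≤ b := by
        calc V.rank ≤ Fintype.card ↥U.2 := V.rank_le_card_width
          _ = U.2.card := Fintype.card_coe _
          _ ≤ b := by simpa using Finset.card_le_univ U.2
      rcases Nat.eq_zero_or_pos b with hb | hb
      · omega
      · exact le_trans hra (Nat.le_mul_of_pos_right a hb)
    · -- the non-vanishing of the minor forces large rank
      intro x hx
      set Cbar : Matrix (Fin a) (Fin b) F :=
        Matrix.of fun i j => if C i j then x (i, j) else 0 with hCbar
      have heval : MvPolynomial.eval x
          (X.submatrix (fun k => ((ρ k : ↥U.1) : Fin a))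
            (fun k => ((σ k : ↥U.2) : Fin b))).det =
          (((Cbar.submatrix (Subtype.val : ↥U.1 → Fin a)
            (Subtype.val : ↥U.2 → Fin b))).submatrix ρ σ).det := by
        rw [RingHom.map_det]
        congr 1
        ext k l
        show MvPolynomial.eval x (X ((ρ k : ↥U.1) : Fin a) ((σ l : ↥U.2) : Fin b))
          = Cbar ((ρ k : ↥U.1) : Fin a) ((σ l : ↥U.2) : Fin b)
        by_cases hC : C ((ρ k : ↥U.1) : Fin a) ((σ l : ↥U.2) : Fin b) <;>
          simp [X, Cbar, hC]
      rw [heval] at hx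
      exact le_rank_of_det_submatrix_ne_zero _ ρ σ hx
  choose r p hgr hp0 hdeg himp using key
  -- the product polynomial
  set G : MvPolynomial (Fin a × Fin b) F := ∏ U ∈ 𝒰, p U with hGdef
  have hG0 : G ≠ 0 := Finset.prod_ne_zero_iff.mpr fun U _ => hp0 U
  have hGdeg : G.totalDegree < Fintype.card F := by
    have h1 : G.totalDegree ≤ 𝒰.card * (a * b) := by
      refine le_trans (totalDegree_finset_prod _ _) ?_
      refine le_trans (Finset.sum_le_sum fun U _ => hdeg U) ?_
      rw [Finset.sum_const, smul_eq_mul]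
    rw [hFq]
    calc G.totalDegree ≤ 𝒰.card * (a * b) := h1
      _ = 𝒰.card * a * b := (mul_assoc _ _ _).symm
      _ < q := hq
  obtain ⟨x, hx⟩ := sz_general G hG0 hGdeg
  refine ⟨Matrix.of fun i j => if C i j then x (i, j) else 0, ?_, ?_⟩
  · intro i j h
    simp [h]
  · intro U hU
    have hpx : MvPolynomial.eval x (p U) ≠ 0 := by
      intro h
      apply hx
      rw [hGdef, map_prod]
      exact Finset.prod_eq_zero hU h
    have hle := himp U x hpx
    refine ⟨⟨_, ?_, rfl⟩, fun s hs => le_trans ((hgr U).2 hs) hle⟩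
    intro i j h
    have h' : C ((i : Fin a)) ((j : Fin b)) = false := h
    simp [h']
end

section
/- Let F be a field and let C be an a×b matrix with entries in {0,1}. Then max{ rank(V) : V ∈ F^{a×b}, V conforms to C } equals the term rank of C. In particular, the maximal rank achievable by matrices conforming to a given 0-1 matrix is the same over every field. -/
open Module Submodule Matrix

/-- From a matrix of rank `r` one can select `r` columns, with injective index
map, which are linearly independent. -/
lemma aux_cols {F : Type} [Field F] {a b r : ℕ} (A : Matrix (Fin a) (Fin b) F)
    (h : A.rank = r) :
    ∃ g : Fin r → Fin b, Function.Injective g ∧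
      LinearIndependent F (fun l => Aᵀ (g l)) := by
  classical
  subst h
  obtain ⟨s, hs_sub, hspan, hli⟩ := exists_linearIndependent F (Set.range Aᵀ)
  haveI : Fintype s := ((Set.finite_range Aᵀ).subset hs_sub).fintype
  have hcard : Fintype.card s = A.rank := by
    rw [A.rank_eq_finrank_span_cols, show A.col = Aᵀ from rfl, ← hspan, finrank_span_set_eq_card hli,
      Set.toFinset_card]
  let e : Fin A.rank ≃ s := (Fintype.equivFinOfCardEq hcard).symm
  have hmem : ∀ l : Fin A.rank, ∃ x, Aᵀ x = (e l : Fin a → F) := fun l =>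
    hs_sub (e l).2
  choose g hg using hmem
  refine ⟨g, ?_, ?_⟩
  · intro l l' hll
    have h1 : (e l : Fin a → F) = (e l' : Fin a → F) := by
      rw [← hg l, ← hg l', hll]
    exact e.injective (Subtype.coe_injective h1)
  · have h2 : (fun l => Aᵀ (g l)) = fun l => ((e l : Fin a → F)) := funext hg
    rw [h2]
    exact hli.comp e e.injective

/-- From a matrix of rank `r` one can select `r` entries, no two in the same
row or column, all of which are nonzero. -/
lemma aux_diag {F : Type} [Field F] {a b r : ℕ} (A : Matrix (Fin a) (Fin b) F)
    (h : A.rank = r) :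
    ∃ (i : Fin r → Fin a) (j : Fin r → Fin b), Function.Injective i ∧
      Function.Injective j ∧ ∀ l, A (i l) (j l) ≠ 0 := by
  classical
  obtain ⟨g, hginj, hgli⟩ := aux_cols A h
  set B := A.submatrix id g with hBdef
  have hB : B.rank = r := by
    rw [B.rank_eq_finrank_span_cols, show B.col = Bᵀ from rfl]
    have hre : Bᵀ = fun l => Aᵀ (g l) := rfl
    rw [hre, finrank_span_eq_card hgli, Fintype.card_fin]
  have hBT : Bᵀ.rank = r := by rw [Matrix.rank_transpose, hB]
  obtain ⟨f, hfinj, hfli⟩ := aux_cols Bᵀ hBT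
  set M := A.submatrix f g with hMdef
  have hM : LinearIndependent F (fun l : Fin r => M l) := hfli
  have hunit : IsUnit M := Matrix.linearIndependent_rows_iff_isUnit.mp hM
  have hdet : M.det ≠ 0 := ((Matrix.isUnit_iff_isUnit_det M).mp hunit).ne_zero
  have hex : ∃ σ : Equiv.Perm (Fin r), (∏ l, M (σ l) l) ≠ 0 := by
    by_contra hc
    push_neg at hc
    apply hdet
    rw [Matrix.det_apply]
    exact Finset.sum_eq_zero fun σ _ => by rw [hc σ, smul_zero]
  obtain ⟨σ, hσ⟩ := hex
  refine ⟨fun l => f (σ l), g, hfinj.comp σ.injective, hginj, fun l => ?_⟩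
  exact Finset.prod_ne_zero_iff.mp hσ l (Finset.mem_univ l)

/-- The maximal rank achievable by matrices over a field `F` conforming to a
given 0-1 matrix `C` equals the term rank of `C`, i.e. the maximum number of
1-entries of `C` no two of which lie in the same row or in the same column.
(In particular this maximal rank is the same over every field.) -/
theorem max_conforming_rank_eq_term_rank
    {a b : ℕ} (F : Type) [Field F] (C : Matrix (Fin a) (Fin b) Bool) :
    sSup {r : ℕ | ∃ V : Matrix (Fin a) (Fin b) F, Conforms V C ∧ V.rank = r} =
    sSup {k : ℕ | ∃ (i : Fin k → Fin a) (j : Fin k → Fin b),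
        Function.Injective i ∧ Function.Injective j ∧
        ∀ l, C (i l) (j l) = true} := by
  classical
  congr 1
  ext r
  simp only [Set.mem_setOf_eq]
  constructor
  · rintro ⟨V, hconf, hrank⟩
    obtain ⟨i, j, hi, hj, hne⟩ := aux_diag V hrank
    refine ⟨i, j, hi, hj, fun l => ?_⟩
    by_contra hCt
    have hF : C (i l) (j l) = false := by simpa using hCt
    exact hne l (hconf _ _ hF)
  · rintro ⟨i, j, hi, hj, hC⟩
    let V : Matrix (Fin a) (Fin b) F :=
      Matrix.of fun x y => if ∃ l, i l = x ∧ j l = y then (1 : F) else 0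
    have hVapp : ∀ x y, V x y = if ∃ l, i l = x ∧ j l = y then (1 : F) else 0 :=
      fun _ _ => rfl
    refine ⟨V, ?_, ?_⟩
    · intro x y hxy
      rw [hVapp, if_neg]
      rintro ⟨l, rfl, rfl⟩
      rw [hC l] at hxy
      exact absurd hxy (by simp)
    · -- the rank of V is r
      have hw : LinearIndependent F (fun l : Fin r => (Pi.single (i l) 1 : Fin a → F)) := by
        have h1 := (Pi.basisFun F (Fin a)).linearIndependent.comp i hi
        simpa [Function.comp_def, Pi.basisFun_apply] using h1
      have hcol : ∀ l, Vᵀ (j l) = (Pi.single (i l) 1 : Fin a → F) := by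
        intro l
        funext x
        rw [Matrix.transpose_apply, hVapp, Pi.single_apply]
        refine if_congr ?_ rfl rfl
        constructor
        · rintro ⟨m, rfl, hm2⟩
          rw [hj hm2]
        · rintro rfl
          exact ⟨l, rfl, rfl⟩
      have hspan : span F (Set.range Vᵀ) =
          span F (Set.range fun l : Fin r => (Pi.single (i l) 1 : Fin a → F)) := by
        apply le_antisymm <;> rw [span_le]
        · rintro _ ⟨y, rfl⟩
          by_cases hy : ∃ l, j l = y
          · obtain ⟨l, rfl⟩ := hy
            rw [hcol l]
            exact subset_span ⟨l, rfl⟩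
          · have h0 : Vᵀ y = 0 := by
              funext x
              rw [Matrix.transpose_apply, hVapp, if_neg]
              · rfl
              · rintro ⟨m, -, hm⟩
                exact hy ⟨m, hm⟩
            rw [h0]
            exact zero_mem _
        · rintro _ ⟨l, rfl⟩
          show (Pi.single (i l) 1 : Fin a → F) ∈ _
          rw [← hcol l]
          exact subset_span ⟨j l, rfl⟩
      rw [Matrix.rank_eq_finrank_span_cols, show V.col = Vᵀ from rfl, hspan, finrank_span_eq_card hw,
        Fintype.card_fin]
end

section
/- Let C be an m×n matrix with entries in {0,1}, let F be a field, and let C̄ ∈ F^{m×n} be a matrix conforming to C whose rank is maximal among all matrices in F^{m×n} conforming to C; write r = rank(C̄). Then there exists a partition of the row index set {1,…,m} into two disjoint sets A_1 and A_2 such that |{ j : C_{ij} = 1 for some i ∈ A_1 }| + |A_2| = r. -/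
open Module Matrix

section AuxLemmas

lemma myRank_add_le {m n : ℕ} {F : Type} [Field F] (A B : Matrix (Fin m) (Fin n) F) :
    (A + B).rank ≤ A.rank + B.rank := by
  have hr : LinearMap.range (A + B).mulVecLin ≤
      LinearMap.range A.mulVecLin ⊔ LinearMap.range B.mulVecLin := by
    rintro x ⟨v, rfl⟩
    refine Submodule.mem_sup.2 ⟨A.mulVecLin v, ⟨v, rfl⟩, B.mulVecLin v, ⟨v, rfl⟩, ?_⟩
    simp [Matrix.mulVecLin_apply, Matrix.add_mulVec]
  calc (A + B).rank ≤ finrank F ↥(LinearMap.range A.mulVecLin ⊔ LinearMap.range B.mulVecLin) :=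
        Submodule.finrank_mono hr
    _ ≤ A.rank + B.rank := Submodule.finrank_add_le_finrank_add_finrank _ _

lemma myRank_le_col_support {m n : ℕ} {F : Type} [Field F] (A : Matrix (Fin m) (Fin n) F)
    (S : Finset (Fin n)) (h : ∀ j ∉ S, ∀ i, A i j = 0) : A.rank ≤ S.card := by
  classical
  rw [Matrix.rank_eq_finrank_span_cols]
  set T : Finset (Fin m → F) := S.image (fun j => Aᵀ j) with hT
  have hsub : Set.range Aᵀ ⊆ insert 0 (T : Set (Fin m → F)) := by
    rintro _ ⟨j, rfl⟩
    by_cases hj : j ∈ S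
    · exact Set.mem_insert_of_mem _ (by simp only [hT, Finset.coe_image]; exact ⟨j, hj, rfl⟩)
    · left
      funext i
      exact h j hj i
  have h1 : finrank F ↥(Submodule.span F (Set.range Aᵀ)) ≤
      finrank F ↥(Submodule.span F (insert 0 (T : Set (Fin m → F)))) :=
    Submodule.finrank_mono (Submodule.span_mono hsub)
  rw [Submodule.span_insert_zero] at h1
  have h2 : finrank F ↥(Submodule.span F (T : Set (Fin m → F))) ≤ T.card :=
    finrank_span_finset_le_card T
  exact h1.trans (h2.trans Finset.card_image_le)

lemma myRank_le_row_support {m n : ℕ} {F : Type} [Field F] (A : Matrix (Fin m) (Fin n) F)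
    (R : Finset (Fin m)) (h : ∀ i ∉ R, ∀ j, A i j = 0) : A.rank ≤ R.card := by
  rw [← Matrix.rank_transpose]
  exact myRank_le_col_support Aᵀ R (fun i hi j => h i hi j)

lemma myCard_le_rank {m n : ℕ} {F : Type} [Field F] {ι : Type} [Fintype ι]
    (A : Matrix (Fin m) (Fin n) F) (ρ : ι → Fin m) (κ : ι → Fin n)
    (hρ : Function.Injective ρ)
    (hcol : ∀ k, Aᵀ (κ k) = Pi.single (ρ k) 1) :
    Fintype.card ι ≤ A.rank := by
  have hli : LinearIndependent F (fun k : ι => Pi.single (ρ k) (1 : F) : ι → Fin m → F) := by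
    have hb : LinearIndependent F (fun i : Fin m => Pi.single i (1 : F) : Fin m → Fin m → F) := by
      have h0 := (Pi.basisFun F (Fin m)).linearIndependent
      have he : ⇑(Pi.basisFun F (Fin m)) = fun i : Fin m => Pi.single i (1 : F) :=
        funext fun i => Pi.basisFun_apply F (Fin m) i
      rwa [he] at h0
    exact hb.comp ρ hρ
  have hmem : ∀ k, (Pi.single (ρ k) (1 : F) : Fin m → F) ∈ LinearMap.range A.mulVecLin := by
    intro k
    refine ⟨Pi.single (κ k) 1, ?_⟩
    rw [Matrix.mulVecLin_apply, Matrix.mulVec_single_one]; exact hcol k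
  have e1 := (finrank_span_eq_card hli).symm
  have hle : Submodule.span F (Set.range fun k : ι => (Pi.single (ρ k) (1 : F) : Fin m → F)) ≤
      LinearMap.range A.mulVecLin := by
    rw [Submodule.span_le]
    rintro _ ⟨k, rfl⟩
    exact hmem k
  have e2 := Submodule.finrank_mono (R := F) hle
  exact le_trans e1.le e2


lemma exists_min_cover_matching {m n : ℕ} (C : Matrix (Fin m) (Fin n) Bool) :
    ∃ (R : Finset (Fin m)) (S : Finset (Fin n)),
      (∀ i j, C i j = true → i ∈ R ∨ j ∈ S) ∧
      (∃ (f : {i // i ∈ R} → Fin n) (g : {j // j ∈ S} → Fin m),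
        Function.Injective f ∧ Function.Injective g ∧
        (∀ x, C x.1 (f x) = true ∧ f x ∉ S) ∧
        (∀ y, C (g y) y.1 = true ∧ g y ∉ R)) := by
  classical
  obtain ⟨p, hp, hmin⟩ := Finset.exists_min_image
    (Finset.univ.filter fun p : Finset (Fin m) × Finset (Fin n) =>
      ∀ i j, C i j = true → i ∈ p.1 ∨ j ∈ p.2)
    (fun p => p.1.card + p.2.card)
    ⟨(Finset.univ, Finset.univ), by simp⟩
  obtain ⟨R, S⟩ := p
  have hcov : ∀ i j, C i j = true → i ∈ R ∨ j ∈ S := by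
    simpa using (Finset.mem_filter.1 hp).2
  have hminimal : ∀ (R' : Finset (Fin m)) (S' : Finset (Fin n)),
      (∀ i j, C i j = true → i ∈ R' ∨ j ∈ S') →
      R.card + S.card ≤ R'.card + S'.card := by
    intro R' S' h'
    exact hmin (R', S') (by simpa using h')
  refine ⟨R, S, hcov, ?_⟩
  -- Hall for rows in R, matched to columns outside S
  have hall1 : ∀ T : Finset {i // i ∈ R},
      T.card ≤ (T.biUnion fun x =>
        Finset.univ.filter fun j => C x.1 j = true ∧ j ∉ S).card := by
    intro T
    set N := T.biUnion fun x =>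
      Finset.univ.filter fun j => C x.1 j = true ∧ j ∉ S with hN
    set T' := T.image (fun x => x.1) with hT'
    have hT'R : T' ⊆ R := by
      intro i hi
      rw [hT', Finset.mem_image] at hi
      obtain ⟨x, _, rfl⟩ := hi
      exact x.2
    have hcov' : ∀ i j, C i j = true → i ∈ R \ T' ∨ j ∈ S ∪ N := by
      intro i j hij
      by_cases hiR : i ∈ R
      · by_cases hiT : i ∈ T'
        · right
          by_cases hjS : j ∈ S
          · exact Finset.mem_union_left _ hjS
          · refine Finset.mem_union_right _ ?_
            rw [hT', Finset.mem_image] at hiT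
            obtain ⟨x, hxT, rfl⟩ := hiT
            rw [hN, Finset.mem_biUnion]
            exact ⟨x, hxT, by simp [hij, hjS]⟩
        · exact Or.inl (Finset.mem_sdiff.2 ⟨hiR, hiT⟩)
      · rcases hcov i j hij with h | h
        · exact absurd h hiR
        · exact Or.inr (Finset.mem_union_left _ h)
    have h1 := hminimal _ _ hcov'
    have h2 : (R \ T').card = R.card - T'.card := Finset.card_sdiff_of_subset hT'R
    have h3 : (S ∪ N).card ≤ S.card + N.card := Finset.card_union_le _ _
    have h4 : T'.card = T.card := Finset.card_image_of_injective T Subtype.val_injective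
    have h5 : T'.card ≤ R.card := Finset.card_le_card hT'R
    omega
  obtain ⟨f, hfinj, hf⟩ := (Finset.all_card_le_biUnion_card_iff_exists_injective _).1 hall1
  -- Hall for cols in S, matched to rows outside R
  have hall2 : ∀ T : Finset {j // j ∈ S},
      T.card ≤ (T.biUnion fun y =>
        Finset.univ.filter fun i => C i y.1 = true ∧ i ∉ R).card := by
    intro T
    set N := T.biUnion fun y =>
      Finset.univ.filter fun i => C i y.1 = true ∧ i ∉ R with hN
    set T' := T.image (fun y => y.1) with hT'
    have hT'S : T' ⊆ S := by
      intro j hj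
      rw [hT', Finset.mem_image] at hj
      obtain ⟨y, _, rfl⟩ := hj
      exact y.2
    have hcov' : ∀ i j, C i j = true → i ∈ R ∪ N ∨ j ∈ S \ T' := by
      intro i j hij
      by_cases hjS : j ∈ S
      · by_cases hjT : j ∈ T'
        · left
          by_cases hiR : i ∈ R
          · exact Finset.mem_union_left _ hiR
          · refine Finset.mem_union_right _ ?_
            rw [hT', Finset.mem_image] at hjT
            obtain ⟨y, hyT, rfl⟩ := hjT
            rw [hN, Finset.mem_biUnion]
            exact ⟨y, hyT, by simp [hij, hiR]⟩
        · exact Or.inr (Finset.mem_sdiff.2 ⟨hjS, hjT⟩)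
      · rcases hcov i j hij with h | h
        · exact Or.inl (Finset.mem_union_left _ h)
        · exact absurd h hjS
    have h1 := hminimal _ _ hcov'
    have h2 : (S \ T').card = S.card - T'.card := Finset.card_sdiff_of_subset hT'S
    have h3 : (R ∪ N).card ≤ R.card + N.card := Finset.card_union_le _ _
    have h4 : T'.card = T.card := Finset.card_image_of_injective T Subtype.val_injective
    have h5 : T'.card ≤ S.card := Finset.card_le_card hT'S
    omega
  obtain ⟨g, hginj, hg⟩ := (Finset.all_card_le_biUnion_card_iff_exists_injective _).1 hall2
  refine ⟨f, g, hfinj, hginj, fun x => ?_, fun y => ?_⟩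
  · have := hf x; simp only [Finset.mem_filter] at this; exact this.2
  · have := hg y; simp only [Finset.mem_filter] at this; exact this.2
end AuxLemmas

/-- If `C̄ ∈ F^{m×n}` conforms to the 0-1 matrix `C` and has maximal rank `r`
among all matrices conforming to `C`, then the row index set can be partitioned
into sets `A₁` and `A₂` such that the number of columns hit by `A₁`
(columns `j` with `C i j = 1` for some `i ∈ A₁`) plus `|A₂|` equals `r`. -/
theorem partition_rows_of_rank_maximized
    {m n : ℕ} (F : Type) [Field F]
    (C : Matrix (Fin m) (Fin n) Bool)
    (Cbar : Matrix (Fin m) (Fin n) F)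
    (hconf : Conforms Cbar C)
    (hmax : ∀ V : Matrix (Fin m) (Fin n) F, Conforms V C → V.rank ≤ Cbar.rank) :
    ∃ A1 A2 : Finset (Fin m),
      Disjoint A1 A2 ∧ A1 ∪ A2 = Finset.univ ∧
      (Finset.univ.filter fun j : Fin n => ∃ i ∈ A1, C i j = true).card
        + A2.card = Cbar.rank := by
  classical
  obtain ⟨R, S, hcov, f, g, hfinj, hginj, hf, hg⟩ := exists_min_cover_matching C
  -- the matching matrix
  let ρ : {i // i ∈ R} ⊕ {j // j ∈ S} → Fin m := Sum.elim (fun x => x.1) (fun y => g y)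
  let κ : {i // i ∈ R} ⊕ {j // j ∈ S} → Fin n := Sum.elim (fun x => f x) (fun y => y.1)
  have hρinj : Function.Injective ρ := by
    rintro (x | y) (x' | y') h <;>
      simp only [ρ, Sum.elim_inl, Sum.elim_inr] at h
    · exact congrArg Sum.inl (Subtype.ext h)
    · exact absurd (by rw [← h]; exact x.2) (hg y').2
    · exact absurd (by rw [h]; exact x'.2) (hg y).2
    · exact congrArg Sum.inr (hginj h)
  have hκinj : Function.Injective κ := by
    rintro (x | y) (x' | y') h <;>
      simp only [κ, Sum.elim_inl, Sum.elim_inr] at h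
    · exact congrArg Sum.inl (hfinj h)
    · exact absurd (by rw [h]; exact y'.2) (hf x).2
    · exact absurd (by rw [← h]; exact y.2) (hf x').2
    · exact congrArg Sum.inr (Subtype.ext h)
  let M : Matrix (Fin m) (Fin n) F := fun i j => if ∃ k, ρ k = i ∧ κ k = j then 1 else 0
  have hMconf : Conforms M C := by
    intro i j hij
    show (if ∃ k, ρ k = i ∧ κ k = j then (1 : F) else 0) = 0
    rw [if_neg]
    rintro ⟨k, rfl, rfl⟩
    rcases k with x | y <;>
      simp only [ρ, κ, Sum.elim_inl, Sum.elim_inr] at hij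
    · exact absurd (hf x).1 (by simp [hij])
    · exact absurd (hg y).1 (by simp [hij])
  have hcol : ∀ k, Mᵀ (κ k) = Pi.single (ρ k) 1 := by
    intro k
    funext i
    show (if ∃ k', ρ k' = i ∧ κ k' = κ k then (1 : F) else 0) = _
    rw [Pi.single_apply]
    by_cases h : i = ρ k
    · rw [if_pos ⟨k, h.symm, rfl⟩, if_pos h]
    · rw [if_neg, if_neg h]
      rintro ⟨k', hk1, hk2⟩
      exact h (hk1.symm.trans (congrArg ρ (hκinj hk2)))
  have hrank1 : R.card + S.card ≤ Cbar.rank := by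
    have := myCard_le_rank M ρ κ hρinj hcol
    rw [Fintype.card_sum, Fintype.card_coe, Fintype.card_coe] at this
    exact this.trans (hmax M hMconf)
  -- upper bound on the rank
  have hhitS : (Finset.univ.filter fun j : Fin n => ∃ i ∈ Rᶜ, C i j = true) ⊆ S := by
    intro j hj
    rw [Finset.mem_filter] at hj
    obtain ⟨-, i, hi, hC⟩ := hj
    rcases hcov i j hC with h | h
    · exact absurd h (Finset.mem_compl.1 hi)
    · exact h
  have hrank2 : Cbar.rank ≤
      (Finset.univ.filter fun j : Fin n => ∃ i ∈ Rᶜ, C i j = true).card + R.card := by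
    let P1 : Matrix (Fin m) (Fin n) F := fun i j => if i ∈ R then 0 else Cbar i j
    let P2 : Matrix (Fin m) (Fin n) F := fun i j => if i ∈ R then Cbar i j else 0
    have hsplit : Cbar = P1 + P2 := by
      ext i j
      rw [Matrix.add_apply]
      by_cases h : i ∈ R <;> simp [P1, P2, h]
    have h1 : P1.rank ≤ (Finset.univ.filter fun j : Fin n => ∃ i ∈ Rᶜ, C i j = true).card := by
      apply myRank_le_col_support
      intro j hj i
      show (if i ∈ R then 0 else Cbar i j) = 0
      by_cases h : i ∈ R
      · rw [if_pos h]
      · rw [if_neg h]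
        apply hconf
        rw [Finset.mem_filter] at hj
        by_contra hC
        exact hj ⟨Finset.mem_univ j, i, Finset.mem_compl.2 h,
          Bool.of_not_eq_false hC⟩
    have h2 : P2.rank ≤ R.card := by
      apply myRank_le_row_support
      intro i hi j
      show (if i ∈ R then Cbar i j else 0) = 0
      rw [if_neg hi]
    calc Cbar.rank = (P1 + P2).rank := by rw [← hsplit]
      _ ≤ P1.rank + P2.rank := myRank_add_le _ _
      _ ≤ _ := Nat.add_le_add h1 h2
  have huniv : Rᶜ ∪ R = Finset.univ := by
    ext i
    simp [Finset.mem_compl, or_comm, em (i ∈ R)]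
  refine ⟨Rᶜ, R, disjoint_compl_left, huniv, ?_⟩
  have hhitcard := Finset.card_le_card hhitS
  omega
end

section
/- Let C' be an x×y matrix with entries in {0,1} and let C be the (x+y)×y matrix obtained by stacking C' on top of the y×y identity matrix I_y; rows 1,…,x of C are called forward rows and rows x+1,…,x+y are called backward rows. For a forward row i set f_i = { j : C'_{ij} = 1 }, and for the backward row x+j set f_{x+j} = { j }. Let F be a field, let A be a set of rows of C, let U_A be the submatrix of C formed by the rows in A, and let r be the maximal rank over all matrices in F^{|A|×y} conforming to U_A. Then there exists a partition A = A_1 ∪ A_2 such that |∪_{e∈A_1} f_e| + |A_2| = r; moreover, writing A_1 = A_F ∪ A_B where A_F consists of the forward rows of A_1 and A_B of the backward rows of A_1, one has |(∪_{i∈A_F} f_i) \ { j : x+j ∈ A_B }| = r − |A_B| − |A_2|. -/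
/-- The `(x+y) × y` 0-1 matrix obtained by stacking the `x × y` matrix `C'` on
top of the `y × y` identity matrix.  Rows `Sum.inl i` are the forward rows and
rows `Sum.inr j` are the backward rows. -/
def stackC {x y : ℕ} (C' : Matrix (Fin x) (Fin y) Bool) :
    Matrix (Fin x ⊕ Fin y) (Fin y) Bool :=
  Matrix.of fun e j =>
    match e with
    | Sum.inl i => C' i j
    | Sum.inr j' => decide (j' = j)

/-- For a forward row `Sum.inl i`, the set `f_i = {j : C' i j = 1}`; for a
backward row `Sum.inr j`, the singleton `{j}`. -/
def fSets {x y : ℕ} (C' : Matrix (Fin x) (Fin y) Bool) :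
    Fin x ⊕ Fin y → Finset (Fin y) :=
  fun e =>
    match e with
    | Sum.inl i => Finset.univ.filter fun j => C' i j = true
    | Sum.inr j' => {j'}

open Finset Module Submodule

lemma sum_inl_getLeft {α β : Type*} (x : α ⊕ β) (h : x.isLeft) :
    Sum.inl (x.getLeft h) = x := by
  cases x with
  | inl a => rfl
  | inr b => simp at h

lemma sum_inr_getRight {α β : Type*} (x : α ⊕ β) (h : x.isRight) :
    Sum.inr (x.getRight h) = x := by
  cases x with
  | inl a => simp at h
  | inr b => rfl

lemma mem_fSets_iff {x y : ℕ} (C' : Matrix (Fin x) (Fin y) Bool)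
    (e : Fin x ⊕ Fin y) (j : Fin y) :
    j ∈ fSets C' e ↔ stackC C' e j = true := by
  cases e with
  | inl i => simp [fSets, stackC]
  | inr j' => simp [fSets, stackC, eq_comm]

/-- A vector supported on a finset `s` lies in the span of the standard basis
vectors indexed by `s`. -/
lemma mem_span_singles {y : ℕ} {F : Type} [Field F] (s : Finset (Fin y)) (v : Fin y → F)
    (hv : ∀ j ∉ s, v j = 0) :
    v ∈ Submodule.span F ((fun j => (Pi.single j 1 : Fin y → F)) '' ↑s) := by
  classical
  have hv' : v = ∑ j ∈ s, v j • (Pi.single j 1 : Fin y → F) := by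
    have h1 : ∑ j : Fin y, (Pi.single j (v j) : Fin y → F) = v := Finset.univ_sum_single v
    have h2 : ∑ j : Fin y, (Pi.single j (v j) : Fin y → F)
        = ∑ j ∈ s, (Pi.single j (v j) : Fin y → F) := by
      refine (Finset.sum_subset (Finset.subset_univ s) ?_).symm
      intro j _ hj
      rw [hv j hj, Pi.single_zero]
    have h3 : ∀ j : Fin y, (Pi.single j (v j) : Fin y → F)
        = v j • (Pi.single j 1 : Fin y → F) := by
      intro j
      rw [← Pi.single_smul, smul_eq_mul, mul_one]
    calc v = ∑ j : Fin y, (Pi.single j (v j) : Fin y → F) := h1.symm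
      _ = ∑ j ∈ s, (Pi.single j (v j) : Fin y → F) := h2
      _ = ∑ j ∈ s, v j • (Pi.single j 1 : Fin y → F) :=
          Finset.sum_congr rfl fun j _ => h3 j
  rw [hv']
  refine Submodule.sum_mem _ fun j hj => Submodule.smul_mem _ _ (Submodule.subset_span ?_)
  exact ⟨j, Finset.mem_coe.mpr hj, rfl⟩

/-- If a matrix contains `k` distinct standard basis vectors among its rows,
its rank is at least `k`. -/
lemma rank_ge_of_single_rows {m : Type*} [Fintype m] {y : ℕ} {F : Type} [Field F]
    (V : Matrix m (Fin y) F) {ι : Type*} [Fintype ι]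
    (ρ : ι → m) (c : ι → Fin y) (hc : Function.Injective c)
    (h : ∀ i, V (ρ i) = Pi.single (c i) 1) :
    Fintype.card ι ≤ V.rank := by
  classical
  have li : LinearIndependent F fun i => V (ρ i) := by
    have heq : (fun i => V (ρ i)) = (⇑(Pi.basisFun F (Fin y)) ∘ c) := by
      funext i
      simp [h i, Pi.basisFun_apply]
    rw [heq]
    exact (Pi.basisFun F (Fin y)).linearIndependent.comp c hc
  have hspan : Submodule.span F (Set.range fun i => V (ρ i)) ≤
      Submodule.span F (Set.range V) := by
    apply Submodule.span_mono
    rintro _ ⟨i, rfl⟩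
    exact ⟨ρ i, rfl⟩
  rw [V.rank_eq_finrank_span_row]
  calc Fintype.card ι
      = finrank F (Submodule.span F (Set.range fun i => V (ρ i))) :=
        (finrank_span_eq_card li).symm
    _ ≤ finrank F (Submodule.span F (Set.range V)) := Submodule.finrank_mono hspan

/-- **Lemma 3 of the paper.**  Let `C` be `C'` stacked on the identity `I_y`,
let `A` be a set of rows of `C`, `U_A` the submatrix of `C` on the rows of `A`,
and `r` the maximal rank over all matrices in `F^{|A|×y}` conforming to `U_A`.
Then `A` can be partitioned as `A = A₁ ∪ A₂` with
`|⋃_{e ∈ A₁} f_e| + |A₂| = r`; moreover, splitting `A₁ = A_F ∪ A_B` into its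
forward and backward rows, `|(⋃_{i ∈ A_F} f_i) \ {j : Sum.inr j ∈ A_B}| =
r − |A_B| − |A₂|` (stated additively). -/
theorem partition_of_rank_maximized_cut
    {x y r : ℕ} (F : Type) [Field F]
    (C' : Matrix (Fin x) (Fin y) Bool)
    (A : Finset (Fin x ⊕ Fin y))
    (hr : IsGreatest
      {k : ℕ | ∃ V : Matrix ↥A (Fin y) F,
          Conforms V ((stackC C').submatrix (Subtype.val : ↥A → Fin x ⊕ Fin y) id)
          ∧ V.rank = k} r) :
    ∃ A1 A2 : Finset (Fin x ⊕ Fin y),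
      Disjoint A1 A2 ∧ A1 ∪ A2 = A ∧
      (A1.biUnion (fSets C')).card + A2.card = r ∧
      (((A1.filter fun e => e.isLeft = true).biUnion (fSets C')) \
          ((A1.filter fun e => e.isRight = true).biUnion (fSets C'))).card
        + (A1.filter fun e => e.isRight = true).card + A2.card = r := by
  classical
  -- Choose `A1 ⊆ A` minimizing `|N(A1)| + |A \ A1|`.
  set N : Finset (Fin x ⊕ Fin y) → Finset (Fin y) :=
    fun S => S.biUnion (fSets C') with hN
  obtain ⟨A1, hA1mem, hA1min⟩ :=
    A.powerset.exists_min_image (fun S => (N S).card + (A \ S).card) ⟨∅, by simp⟩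
  have hA1sub : A1 ⊆ A := Finset.mem_powerset.mp hA1mem
  set A2 : Finset (Fin x ⊕ Fin y) := A \ A1 with hA2
  have hdisj : Disjoint A1 A2 := Finset.disjoint_sdiff
  have hunion : A1 ∪ A2 = A := Finset.union_sdiff_of_subset hA1sub
  have hA2card : A2.card = A.card - A1.card := Finset.card_sdiff_of_subset hA1sub
  have hA1le : A1.card ≤ A.card := Finset.card_le_card hA1sub
  -- `|N(A1)| ≤ |A1|` by comparing with `S = ∅`.
  have key1 : (N A1).card ≤ A1.card := by
    have h0 := hA1min ∅ (by simp)
    rw [show N ∅ = ∅ by simp [hN]] at h0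
    simp only [Finset.card_empty, Finset.sdiff_empty, zero_add] at h0
    omega
  set d : ℕ := A1.card - (N A1).card with hd
  -- Main claim: `r = |N(A1)| + |A2|`.
  have main : (N A1).card + A2.card = r := by
    have upper : r ≤ (N A1).card + A2.card := by
      obtain ⟨V, hVconf, hVrank⟩ := hr.1
      rw [← hVrank]
      set B1 : Finset (Fin y → F) := (N A1).image fun j => (Pi.single j 1 : Fin y → F) with hB1
      set B2 : Finset (Fin y → F) :=
        (Finset.univ.filter fun e : ↥A => e.val ∈ A2).image V with hB2
      have hrange : Set.range V ⊆
          ↑(Submodule.span F (B1 : Set (Fin y → F)) ⊔ Submodule.span F (B2 : Set (Fin y → F))) := by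
        rintro _ ⟨e, rfl⟩
        by_cases he : e.val ∈ A1
        · apply Submodule.mem_sup_left
          rw [hB1, Finset.coe_image]
          refine mem_span_singles _ _ ?_
          intro j hj
          apply hVconf
          have hnot : j ∉ fSets C' e.val := fun hjf =>
            hj (Finset.mem_biUnion.mpr ⟨e.val, he, hjf⟩)
          simp only [Matrix.submatrix_apply, id_eq]
          rcases Bool.eq_false_or_eq_true (stackC C' e.val j) with h | h
          · exact absurd ((mem_fSets_iff C' e.val j).mpr h) hnot
          · exact h
        · refine Submodule.mem_sup_right (Submodule.subset_span ?_)
          have he2 : e.val ∈ A2 := Finset.mem_sdiff.mpr ⟨e.2, he⟩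
          exact Finset.mem_coe.mpr
            (Finset.mem_image_of_mem V (Finset.mem_filter.mpr ⟨Finset.mem_univ e, he2⟩))
      have h1 : V.rank ≤ finrank F
          ↥(Submodule.span F (B1 : Set (Fin y → F)) ⊔ Submodule.span F (B2 : Set (Fin y → F))) := by
        rw [V.rank_eq_finrank_span_row]
        exact Submodule.finrank_mono (Submodule.span_le.mpr hrange)
      have h2 : finrank F
          ↥(Submodule.span F (B1 : Set (Fin y → F)) ⊔ Submodule.span F (B2 : Set (Fin y → F)))
          ≤ finrank F ↥(Submodule.span F (B1 : Set (Fin y → F)))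
            + finrank F ↥(Submodule.span F (B2 : Set (Fin y → F))) :=
        Submodule.finrank_add_le_finrank_add_finrank _ _
      have h3 : finrank F ↥(Submodule.span F (B1 : Set (Fin y → F))) ≤ (N A1).card :=
        le_trans (finrank_span_finset_le_card B1) Finset.card_image_le
      have h4 : finrank F ↥(Submodule.span F (B2 : Set (Fin y → F))) ≤ A2.card := by
        refine le_trans (finrank_span_finset_le_card B2) (le_trans Finset.card_image_le ?_)
        have heq : (Finset.univ.filter fun e : ↥A => e.val ∈ A2).card
            = ((Finset.univ.filter fun e : ↥A => e.val ∈ A2).image Subtype.val).card :=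
          (Finset.card_image_of_injective _ Subtype.val_injective).symm
        rw [heq]
        apply Finset.card_le_card
        intro a ha
        obtain ⟨e, he, rfl⟩ := Finset.mem_image.mp ha
        exact (Finset.mem_filter.mp he).2
      omega
    have lower : (N A1).card + A2.card ≤ r := by
      -- Hall's theorem with `d` dummy columns.
      set t : ↥A → Finset (Fin y ⊕ Fin d) :=
        fun e => (fSets C' e.val).disjSum Finset.univ with ht
      have hall : ∀ s : Finset ↥A, s.card ≤ (s.biUnion t).card := by
        intro s
        rcases s.eq_empty_or_nonempty with rfl | hs
        · simp
        set S' : Finset (Fin x ⊕ Fin y) := s.image Subtype.val with hS'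
        have hS'sub : S' ⊆ A := by
          intro a ha
          obtain ⟨e, _, rfl⟩ := Finset.mem_image.mp ha
          exact e.2
        have hcards : s.card = S'.card :=
          (Finset.card_image_of_injective _ Subtype.val_injective).symm
        have hbi : s.biUnion t = (N S').disjSum Finset.univ := by
          ext k
          cases k with
          | inl j =>
            simp only [Finset.mem_biUnion, ht, Finset.inl_mem_disjSum, hN, hS',
              Finset.mem_image]
            constructor
            · rintro ⟨e, he, hj⟩
              exact ⟨e.val, ⟨e, he, rfl⟩, hj⟩
            · rintro ⟨a, ⟨e, he, rfl⟩, hj⟩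
              exact ⟨e, he, hj⟩
          | inr q =>
            simp only [Finset.mem_biUnion, ht, Finset.inr_mem_disjSum, Finset.mem_univ,
              iff_true]
            exact ⟨hs.choose, hs.choose_spec, trivial⟩
        rw [hbi, Finset.card_disjSum, Finset.card_univ, Fintype.card_fin, hcards]
        -- minimality gives `|S'| ≤ |N S'| + d`
        have hmin := hA1min S' (Finset.mem_powerset.mpr hS'sub)
        have h1 : (A \ S').card = A.card - S'.card := Finset.card_sdiff_of_subset hS'sub
        have h2 : S'.card ≤ A.card := Finset.card_le_card hS'sub
        omega
      obtain ⟨σ, hσinj, hσmem⟩ :=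
        (Finset.all_card_le_biUnion_card_iff_exists_injective t).mp hall
      set V : Matrix ↥A (Fin y) F :=
        fun e j => if σ e = Sum.inl j then 1 else 0 with hV
      have hVconf : Conforms V
          ((stackC C').submatrix (Subtype.val : ↥A → Fin x ⊕ Fin y) id) := by
        intro e j hj
        simp only [Matrix.submatrix_apply, id_eq] at hj
        rw [hV]
        simp only
        rw [if_neg]
        intro hσe
        have hmem := hσmem e
        rw [hσe, ht] at hmem
        simp only [Finset.inl_mem_disjSum] at hmem
        rw [mem_fSets_iff C' e.val j] at hmem
        rw [hmem] at hj
        simp at hj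
      have hVr : V.rank ≤ r := hr.2 ⟨V, hVconf, rfl⟩
      -- lower bound on the rank of V
      set S' : Finset ↥A := Finset.univ.filter (fun e => (σ e).isLeft = true) with hS'
      have hleft : ∀ i : ↥S', (σ i.val).isLeft = true := by
        intro i
        have hi : i.val ∈ Finset.univ.filter (fun e => (σ e).isLeft = true) := by
          rw [← hS']; exact i.2
        exact (Finset.mem_filter.mp hi).2
      set c : ↥S' → Fin y := fun i => (σ i.val).getLeft (hleft i) with hc
      have hgl : ∀ i : ↥S', Sum.inl (c i) = σ i.val := fun i =>
        sum_inl_getLeft _ (hleft i)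
      have hrows : ∀ i : ↥S', V i.val = Pi.single (c i) 1 := by
        intro i
        funext j
        rw [hV]
        simp only
        by_cases hj : c i = j
        · rw [if_pos (by rw [← hgl i, hj]), hj, Pi.single_eq_same]
        · rw [if_neg (fun h => hj (by rw [← hgl i] at h; exact Sum.inl.inj h)),
            Pi.single_eq_of_ne (Ne.symm hj)]
      have hcinj : Function.Injective c := by
        intro i i' h
        have h1 : σ i.val = σ i'.val := by
          rw [← hgl i, ← hgl i']
          exact congrArg Sum.inl h
        exact Subtype.ext (hσinj h1)
      have hrk : S'.card ≤ V.rank := by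
        have := rank_ge_of_single_rows V (fun i : ↥S' => i.val) c hcinj hrows
        rwa [Fintype.card_coe] at this
      -- `S'` misses at most `d` rows
      have hmiss : A.card ≤ S'.card + d := by
        set T : Finset ↥A := Finset.univ.filter (fun e => ¬ ((σ e).isLeft = true)) with hT
        have hpart : S'.card + T.card = A.card := by
          rw [hS', hT, Finset.card_filter_add_card_filter_not, Finset.card_univ,
            Fintype.card_coe]
        have hTd : T.card ≤ d := by
          have h1 : T.card = (T.image σ).card :=
            (Finset.card_image_of_injective _ hσinj).symm
          have h2 : T.image σ ⊆ (Finset.univ : Finset (Fin d)).image Sum.inr := by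
            intro k hk
            obtain ⟨e, he, rfl⟩ := Finset.mem_image.mp hk
            have heT := he
            rw [hT, Finset.mem_filter] at heT
            have hR : (σ e).isRight = true := by
              cases hσe : σ e
              · exact absurd (by rw [hσe]; rfl) heT.2
              · rfl
            obtain ⟨q, hq⟩ := Sum.isRight_iff.mp hR
            rw [hq]
            exact Finset.mem_image_of_mem _ (Finset.mem_univ q)
          calc T.card = (T.image σ).card := h1
            _ ≤ ((Finset.univ : Finset (Fin d)).image Sum.inr).card := Finset.card_le_card h2
            _ ≤ d := by
                rw [Finset.card_image_of_injective _ Sum.inr_injective, Finset.card_univ,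
                  Fintype.card_fin]
        omega
      have hfinal : (N A1).card + A2.card = A.card - d := by omega
      omega
    omega
  refine ⟨A1, A2, hdisj, hunion, main, ?_⟩
  -- second identity
  set AF : Finset (Fin x ⊕ Fin y) := A1.filter fun e => e.isLeft = true with hAF
  set AB : Finset (Fin x ⊕ Fin y) := A1.filter fun e => e.isRight = true with hAB
  have hXY : AF.biUnion (fSets C') ∪ AB.biUnion (fSets C') = N A1 := by
    rw [hN]
    ext j
    simp only [Finset.mem_union, Finset.mem_biUnion, hAF, hAB, Finset.mem_filter]
    constructor
    · rintro (⟨e, ⟨he, _⟩, hj⟩ | ⟨e, ⟨he, _⟩, hj⟩) <;> exact ⟨e, he, hj⟩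
    · rintro ⟨e, he, hj⟩
      cases e with
      | inl i => exact Or.inl ⟨_, ⟨he, rfl⟩, hj⟩
      | inr q => exact Or.inr ⟨_, ⟨he, rfl⟩, hj⟩
  have hABright : ∀ e ∈ AB, Sum.isRight e = true := by
    intro e he
    rw [hAB, Finset.mem_filter] at he
    exact he.2
  have hYcard : (AB.biUnion (fSets C')).card = AB.card := by
    symm
    apply Finset.card_bij (i := fun e he => e.getRight (hABright e he))
    · intro e he
      obtain ⟨j', hj'⟩ := Sum.isRight_iff.mp (hABright e he)
      apply Finset.mem_biUnion.mpr
      refine ⟨e, he, ?_⟩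
      subst hj'
      simp [fSets]
    · intro e he e' he' h
      rw [← sum_inr_getRight e (hABright e he), ← sum_inr_getRight e' (hABright e' he')]
      exact congrArg Sum.inr h
    · intro j hj
      obtain ⟨e, he, hje⟩ := Finset.mem_biUnion.mp hj
      refine ⟨e, he, ?_⟩
      obtain ⟨j', hj'⟩ := Sum.isRight_iff.mp (hABright e he)
      subst hj'
      simp only [fSets, Finset.mem_singleton] at hje
      simp [hje]
  have hsd : (AF.biUnion (fSets C') \ AB.biUnion (fSets C')).card
      + (AB.biUnion (fSets C')).card = (AF.biUnion (fSets C') ∪ AB.biUnion (fSets C')).card :=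
    Finset.card_sdiff_add_card _ _
  rw [hXY] at hsd
  omega
end

section
/- Let q be a prime power and let x, y be positive integers. Let C' ∈ {0,1}^{x×y}, let C be the (x+y)×y 0-1 matrix obtained by stacking C' on top of the y×y identity matrix I_y, and let 𝒜 be a nonempty finite collection of subsets of the row set {1,…,x+y}. Let C̄ ∈ F_q^{(x+y)×y} be a matrix conforming to C such that every diagonal entry of its bottom y×y block is nonzero and such that for every A ∈ 𝒜 the submatrix Ū_A of C̄ on the rows in A has rank equal to the maximal rank over all matrices conforming to U_A (the submatrix of C on rows A). Set k_f = max_{A∈𝒜} (|A| − rank(Ū_A)) and assume 1 ≤ k_f ≤ x. Let G ∈ F_q^{x×x} be a random matrix with independent entries uniform on F_q, let E be the (x+y)×(x+y) matrix whose first x columns are G stacked on the y×x zero matrix and whose last y columns are C̄, and let E^r be the matrix formed by the last k_f + y columns of E. Then with probability at least 1 − |𝒜|·k_f·(x+y)/q, for every A ∈ 𝒜 the submatrix E^r_A of E^r formed by the rows in A has full row rank |A|. -/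
open scoped Classical
open Matrix

/-- The matrix `E^r` formed by the last `kf + y` columns of the encoding matrix
`E = [[G, C̄_top], [0, C̄_bot]]`: its first `kf` columns are the last `kf`
columns of `G` stacked on the `y × kf` zero matrix, and its last `y` columns
are `C̄`. -/
def encER {x y kf : ℕ} {F : Type*} [Zero F] (hkfx : kf ≤ x)
    (G : Matrix (Fin x) (Fin x) F)
    (Cbar : Matrix (Fin x ⊕ Fin y) (Fin y) F) :
    Matrix (Fin x ⊕ Fin y) (Fin kf ⊕ Fin y) F :=
  Matrix.of fun ri ci =>
    match ci with
    | Sum.inl c =>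
        match ri with
        | Sum.inl i => G i ⟨x - kf + c.val, by have := c.isLt; omega⟩
        | Sum.inr _ => 0
    | Sum.inr c => Cbar ri c

section Aux
variable {F : Type} [Field F] [Fintype F] [DecidableEq F]

lemma card_dot_zero {n : ℕ} (u : Fin n → F) (hu : u ≠ 0) :
    Fintype.card {v : Fin n → F // ∑ i, u i * v i = 0}
      = Fintype.card F ^ (n - 1) := by
  set ℓ : (Fin n → F) →ₗ[F] F := ∑ i, u i • LinearMap.proj i with hℓ
  have happ : ∀ v, ℓ v = ∑ i, u i * v i := by
    intro v
    simp [hℓ, LinearMap.sum_apply, LinearMap.proj, smul_eq_mul]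
  have hsurj : LinearMap.range ℓ = ⊤ := by
    obtain ⟨i₀, hi₀⟩ : ∃ i, u i ≠ 0 := by
      by_contra h; push_neg at h; exact hu (funext h)
    rw [LinearMap.range_eq_top]
    intro c
    refine ⟨fun j => if j = i₀ then (u i₀)⁻¹ * c else 0, ?_⟩
    rw [happ]
    rw [Finset.sum_eq_single i₀]
    · simp [hi₀]
    · intro b _ hb; simp [hb]
    · simp
  have hrn := LinearMap.finrank_range_add_finrank_ker ℓ
  rw [hsurj, finrank_top, Module.finrank_self] at hrn
  have hdom : Module.finrank F (Fin n → F) = n := by simp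
  have hker : Module.finrank F (LinearMap.ker ℓ) = n - 1 := by omega
  have hcard : Fintype.card (LinearMap.ker ℓ) = Fintype.card F ^ (n - 1) := by
    rw [Module.card_eq_pow_finrank (K := F), hker]
  rw [← hcard]
  apply Fintype.card_congr
  apply Equiv.subtypeEquivRight
  intro v
  rw [LinearMap.mem_ker, happ]

lemma card_col_conds {x kf : ℕ} (col : Fin kf → Fin x) (hcol : Function.Injective col)
    (u : Fin x → F) (hu : u ≠ 0) :
    Fintype.card {G : Matrix (Fin x) (Fin x) F //
        ∀ c : Fin kf, ∑ i, u i * G i (col c) = 0}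
      = (Fintype.card F ^ (x - 1)) ^ kf * (Fintype.card F ^ x) ^ (x - kf) := by
  -- transpose view: a matrix is a function assigning each column index its column
  let e : Matrix (Fin x) (Fin x) F ≃ (Fin x → Fin x → F) :=
    ⟨fun G => fun j i => G i j, fun h => fun i j => h j i, fun _ => rfl, fun _ => rfl⟩
  have step1 : Fintype.card {G : Matrix (Fin x) (Fin x) F //
        ∀ c : Fin kf, ∑ i, u i * G i (col c) = 0}
      = Fintype.card {h : Fin x → Fin x → F //
        ∀ j : Fin x, ∀ c : Fin kf, col c = j → ∑ i, u i * h j i = 0} := by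
    apply Fintype.card_congr
    refine (Equiv.subtypeEquiv e ?_)
    intro G
    constructor
    · rintro hG j c rfl; exact hG c
    · intro hG c; exact hG (col c) c rfl
  rw [step1]
  have step2 : Fintype.card {h : Fin x → Fin x → F //
        ∀ j : Fin x, ∀ c : Fin kf, col c = j → ∑ i, u i * h j i = 0}
      = ∏ j : Fin x, Fintype.card {v : Fin x → F //
          ∀ c : Fin kf, col c = j → ∑ i, u i * v i = 0} := by
    rw [Fintype.card_congr (Equiv.subtypePiEquivPi
      (p := fun j (v : Fin x → F) => ∀ c : Fin kf, col c = j → ∑ i, u i * v i = 0))]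
    exact Fintype.card_pi
  rw [step2]
  have step3 : ∀ j : Fin x,
      Fintype.card {v : Fin x → F // ∀ c : Fin kf, col c = j → ∑ i, u i * v i = 0}
        = if j ∈ Finset.image col Finset.univ
            then Fintype.card F ^ (x - 1) else Fintype.card F ^ x := by
    intro j
    by_cases hj : j ∈ Finset.image col Finset.univ
    · rw [if_pos hj]
      obtain ⟨c₀, _, rfl⟩ := Finset.mem_image.mp hj
      rw [← card_dot_zero u hu]
      apply Fintype.card_congr
      apply Equiv.subtypeEquivRight
      intro v
      constructor
      · intro h; exact h c₀ rfl
      · intro h c hc; exact h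
    · rw [if_neg hj]
      have : ∀ v : Fin x → F, (∀ c : Fin kf, col c = j → ∑ i, u i * v i = 0) := by
        intro v c hc; exact absurd (Finset.mem_image.mpr ⟨c, Finset.mem_univ c, hc⟩) hj
      calc Fintype.card {v : Fin x → F // ∀ c : Fin kf, col c = j → ∑ i, u i * v i = 0}
          = Fintype.card (Fin x → F) :=
            Fintype.card_congr (Equiv.subtypeUnivEquiv this)
        _ = Fintype.card F ^ x := by simp [Fintype.card_fun]
  calc ∏ j : Fin x, Fintype.card {v : Fin x → F //
          ∀ c : Fin kf, col c = j → ∑ i, u i * v i = 0}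
      = ∏ j : Fin x, (if j ∈ Finset.image col Finset.univ
            then Fintype.card F ^ (x - 1) else Fintype.card F ^ x) :=
        Finset.prod_congr rfl (fun j _ => step3 j)
    _ = (Fintype.card F ^ (x - 1)) ^ kf * (Fintype.card F ^ x) ^ (x - kf) := by
        rw [Finset.prod_ite, Finset.prod_const, Finset.prod_const]
        have h1 : (Finset.univ.filter fun j => j ∈ Finset.image col Finset.univ).card = kf := by
          rw [Finset.filter_mem_eq_inter, Finset.univ_inter,
            Finset.card_image_of_injective _ hcol, Finset.card_univ, Fintype.card_fin]
        have h2 := Finset.card_filter_add_card_filter_not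
          (s := (Finset.univ : Finset (Fin x)))
          (p := fun j => j ∈ Finset.image col Finset.univ)
        rw [h1] at h2
        rw [Finset.card_univ, Fintype.card_fin] at h2
        rw [h1]
        rw [Nat.eq_sub_of_add_eq' h2]

lemma geom_bound : ∀ (k q : ℕ), 1 ≤ q → q ^ k ≤ k * q ^ (k - 1) * (q - 1) + 1
  | 0, q, hq => by simp
  | (k+1), q, hq => by
      have ih := geom_bound k q hq
      have h1 : q ^ (k - 1) ≤ q ^ k := Nat.pow_le_pow_right hq (by omega)
      have h2 : q ^ (k + 1) = q ^ k * (q - 1) + q ^ k := by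
        have : q ^ (k+1) = q ^ k * q := pow_succ q k
        have h3 : q ^ k * q = q ^ k * (q - 1) + q ^ k * 1 := by
          rw [← Nat.mul_add]; congr 1; omega
        omega
      have h4 : k * q ^ (k-1) * (q-1) ≤ k * q ^ k * (q-1) :=
        Nat.mul_le_mul_right _ (Nat.mul_le_mul_left _ h1)
      have : q ^ (k+1) ≤ q ^ k * (q-1) + (k * q ^ (k-1) * (q-1) + 1) := by omega
      calc q ^ (k+1) ≤ q ^ k * (q-1) + (k * q ^ k * (q-1) + 1) := by omega
        _ = (k+1) * q ^ ((k+1) - 1) * (q - 1) + 1 := by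
            simp only [Nat.add_sub_cancel]
            ring

lemma exp_arith (x kf : ℕ) (hx : 0 < x) (hkf1 : 1 ≤ kf) (hkfx : kf ≤ x) :
    kf - 1 + ((x - 1) * kf + x * (x - kf)) = x * x - 1 := by
  have e1 : (x - 1) * kf = x * kf - kf := by rw [Nat.sub_mul, one_mul]
  have e2 : x * (x - kf) = x * x - x * kf := Nat.mul_sub x x kf
  have e3 : kf ≤ x * kf := Nat.le_mul_of_pos_left kf hx
  have e4 : x * kf ≤ x * x := Nat.mul_le_mul_left x hkfx
  rw [e1, e2]
  omega

lemma bad_count {x y kf : ℕ} (hx : 0 < x) (hkf1 : 1 ≤ kf) (hkfx : kf ≤ x)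
    (Cbar : Matrix (Fin x ⊕ Fin y) (Fin y) F)
    (C' : Matrix (Fin x) (Fin y) Bool)
    (hconf : Conforms Cbar (stackC C'))
    (hdiag : ∀ j : Fin y, Cbar (Sum.inr j) j ≠ 0)
    (A : Finset (Fin x ⊕ Fin y))
    (hA : A.card - (Cbar.submatrix (Subtype.val : ↥A → Fin x ⊕ Fin y) id).rank ≤ kf) :
    (Finset.univ.filter fun G : Matrix (Fin x) (Fin x) F =>
        ¬ ((encER hkfx G Cbar).submatrix
            (Subtype.val : ↥A → Fin x ⊕ Fin y) id).rank = A.card).card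
      ≤ kf * Fintype.card F ^ (x * x - 1) := by
  set q := Fintype.card F with hq
  have hq2 : 2 ≤ q := Fintype.one_lt_card
  set Ubar : Matrix ↥A (Fin y) F :=
    Cbar.submatrix (Subtype.val : ↥A → Fin x ⊕ Fin y) id with hUbar
  set K : Submodule F (↥A → F) := LinearMap.ker Ubar.vecMulLinear with hK
  -- the "forward part" linear map
  set φl : (↥A → F) →ₗ[F] (Fin x → F) :=
    { toFun := fun w i => if h : Sum.inl i ∈ A then w ⟨Sum.inl i, h⟩ else 0
      map_add' := fun w v => funext fun i => by
        by_cases h : Sum.inl i ∈ A <;> simp [h]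
      map_smul' := fun c w => funext fun i => by
        by_cases h : Sum.inl i ∈ A <;> simp [h] } with hφl
  set W : Submodule F (Fin x → F) := K.map φl with hW
  set col : Fin kf → Fin x := fun c => ⟨x - kf + c.val, by have := c.isLt; omega⟩
    with hcol
  have hcolinj : Function.Injective col := by
    intro a b hab
    have := congrArg Fin.val hab
    simp only [hcol] at this
    exact Fin.ext (by omega)
  -- summation lemma
  have hsum : ∀ (w : ↥A → F) (f : Fin x ⊕ Fin y → F), (∀ j, f (Sum.inr j) = 0) →
      ∑ a : ↥A, w a * f a.val = ∑ i : Fin x, φl w i * f (Sum.inl i) := by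
    intro w f hf
    set g : Fin x ⊕ Fin y → F :=
      fun e => (if h : e ∈ A then w ⟨e, h⟩ else 0) * f e with hg
    have e1 : ∑ a : ↥A, w a * f a.val = ∑ a : ↥A, g a.val := by
      apply Finset.sum_congr rfl
      intro a _
      simp [hg, a.2]
    have e2 : ∑ a : ↥A, g a.val = ∑ e ∈ A, g e := by
      rw [Finset.univ_eq_attach]
      exact Finset.sum_attach A g
    have e3 : ∑ e ∈ A, g e = ∑ e : Fin x ⊕ Fin y, g e := by
      apply Finset.sum_subset (Finset.subset_univ A)
      intro e _ he
      simp [hg, he]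
    have e4 : ∑ e : Fin x ⊕ Fin y, g e
        = ∑ i : Fin x, g (Sum.inl i) + ∑ j : Fin y, g (Sum.inr j) :=
      Fintype.sum_sum_type g
    have e5 : ∑ j : Fin y, g (Sum.inr j) = 0 := by
      apply Finset.sum_eq_zero; intro j _; simp [hg, hf j]
    rw [e1, e2, e3, e4, e5, add_zero]
    rfl
  -- injectivity of φl on K
  have hKinj : ∀ w ∈ K, φl w = 0 → w = 0 := by
    intro w hwK hw0
    have hfwd : ∀ (i : Fin x) (h : Sum.inl i ∈ A), w ⟨Sum.inl i, h⟩ = 0 := by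
      intro i h
      have := congrFun hw0 i
      simpa [hφl, h] using this
    funext a
    obtain ⟨e, he⟩ := a
    match e with
    | Sum.inl i => exact hfwd i he
    | Sum.inr j =>
      have hcolzero : Matrix.vecMul w Ubar j = 0 := by
        have : Ubar.vecMulLinear w = 0 := hwK
        rw [Matrix.vecMulLinear_apply] at this
        exact congrFun this j
      have hsum0 : ∑ a : ↥A, w a * Ubar a j = 0 := by
        rw [← hcolzero]
        simp [Matrix.vecMul, dotProduct]
      rw [Finset.sum_eq_single (⟨Sum.inr j, he⟩ : ↥A)] at hsum0
      · have hd := hdiag j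
        have : Ubar ⟨Sum.inr j, he⟩ j = Cbar (Sum.inr j) j := rfl
        rw [this] at hsum0
        exact (mul_eq_zero.mp hsum0).resolve_right hd
      · rintro ⟨e', he'⟩ _ hne
        match e' with
        | Sum.inl i => rw [hfwd i he', zero_mul]
        | Sum.inr j' =>
          have hjj : j' ≠ j := by
            rintro rfl; exact hne rfl
          have : Ubar ⟨Sum.inr j', he'⟩ j = 0 := by
            apply hconf
            simp [stackC, hjj]
          rw [this, mul_zero]
      · intro h; exact absurd (Finset.mem_univ _) h
  -- dimension bounds
  have hkerK : LinearMap.ker (Ubarᵀ.mulVecLin) = K := by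
    ext v
    simp [hK, LinearMap.mem_ker, Matrix.mulVec_transpose]
  have hfrA : Module.finrank F (↥A → F) = A.card := by
    simp [Module.finrank_pi]
  have hdimK : Module.finrank F K ≤ kf := by
    have h1 := LinearMap.finrank_range_add_finrank_ker (Ubarᵀ.mulVecLin)
    rw [hkerK, hfrA] at h1
    have h3 : Module.finrank F (LinearMap.range Ubarᵀ.mulVecLin) = Ubarᵀ.rank := rfl
    rw [h3, Matrix.rank_transpose] at h1
    omega
  have hdimW : Module.finrank F W ≤ kf :=
    le_trans (Submodule.finrank_map_le φl K) hdimK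
  have hcardW : Fintype.card W ≤ q ^ kf := by
    rw [Module.card_eq_pow_finrank (K := F) (V := W)]
    exact Nat.pow_le_pow_right (by omega) hdimW
  set S : Finset (Fin x → F) := Finset.univ.filter (fun u => u ∈ W ∧ u ≠ 0) with hS
  have hcardS : S.card + 1 ≤ q ^ kf := by
    have hsub : S ⊆ Finset.univ.filter (fun u : Fin x → F => u ∈ W) := by
      intro u hu
      simp only [hS, Finset.mem_filter] at hu ⊢
      exact ⟨hu.1, hu.2.1⟩
    have h0mem : (0 : Fin x → F) ∈ Finset.univ.filter (fun u : Fin x → F => u ∈ W) := by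
      simp [W.zero_mem]
    have h0not : (0 : Fin x → F) ∉ S := by simp [hS]
    have hlt : S.card < (Finset.univ.filter (fun u : Fin x → F => u ∈ W)).card :=
      Finset.card_lt_card ((Finset.ssubset_iff_of_subset hsub).mpr ⟨0, h0mem, h0not⟩)
    have hWcard : (Finset.univ.filter (fun u : Fin x → F => u ∈ W)).card
        = Fintype.card W := (Fintype.card_subtype _).symm
    omega
  have hZ : ∀ u : Fin x → F, u ≠ 0 →
      (Finset.univ.filter fun G : Matrix (Fin x) (Fin x) F =>
          ∀ c : Fin kf, ∑ i, u i * G i (col c) = 0).card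
        = (q ^ (x-1)) ^ kf * (q ^ x) ^ (x - kf) := by
    intro u hu
    rw [← card_col_conds col hcolinj u hu]
    exact (Fintype.card_subtype _).symm
  have hbad : ∀ G : Matrix (Fin x) (Fin x) F,
      ¬ ((encER hkfx G Cbar).submatrix (Subtype.val : ↥A → Fin x ⊕ Fin y) id).rank
          = A.card →
      ∃ u, (u ∈ W ∧ u ≠ 0) ∧ ∀ c : Fin kf, ∑ i, u i * G i (col c) = 0 := by
    intro G hG
    set M := (encER hkfx G Cbar).submatrix (Subtype.val : ↥A → Fin x ⊕ Fin y) id with hM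
    have hker : LinearMap.ker M.vecMulLinear ≠ ⊥ := by
      intro hbot
      apply hG
      have h1 := LinearMap.finrank_range_add_finrank_ker (Mᵀ.mulVecLin)
      have h2 : LinearMap.ker Mᵀ.mulVecLin = ⊥ := by
        rw [← hbot]
        ext v
        simp [LinearMap.mem_ker, Matrix.mulVec_transpose]
      rw [h2, finrank_bot, add_zero, hfrA] at h1
      have h3 : Module.finrank F (LinearMap.range Mᵀ.mulVecLin) = Mᵀ.rank := rfl
      rw [h3, Matrix.rank_transpose] at h1
      exact h1
    obtain ⟨w, hwker, hw0⟩ := (Submodule.ne_bot_iff _).mp hker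
    have hwM : Matrix.vecMul w M = 0 := hwker
    have hwK : w ∈ K := by
      rw [hK, LinearMap.mem_ker, Matrix.vecMulLinear_apply]
      funext j
      have h1 := congrFun hwM (Sum.inr j)
      simpa [Matrix.vecMul, dotProduct, hM, hUbar, encER] using h1
    refine ⟨φl w, ⟨Submodule.mem_map_of_mem hwK,
      fun h0 => hw0 (hKinj w hwK h0)⟩, ?_⟩
    intro c
    have h1 := congrFun hwM (Sum.inl c)
    have h2 : ∑ a : ↥A, w a * (encER hkfx G Cbar) a.val (Sum.inl c) = 0 := by
      simpa [Matrix.vecMul, dotProduct, hM] using h1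
    rw [hsum w (fun e => (encER hkfx G Cbar) e (Sum.inl c)) (fun j => rfl)] at h2
    exact h2
  -- double counting
  set Bad : Finset (Matrix (Fin x) (Fin x) F) :=
    Finset.univ.filter (fun G => ¬ ((encER hkfx G Cbar).submatrix
      (Subtype.val : ↥A → Fin x ⊕ Fin y) id).rank = A.card) with hBad
  clear_value q Ubar K φl W col S Bad
  clear hcol hφl
  have key : Bad.card * (q - 1) ≤ ∑ u ∈ S,
      (Finset.univ.filter fun G : Matrix (Fin x) (Fin x) F =>
        ∀ c : Fin kf, ∑ i, u i * G i (col c) = 0).card := by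
    have swap : ∑ u ∈ S, (Finset.univ.filter fun G : Matrix (Fin x) (Fin x) F =>
        ∀ c : Fin kf, ∑ i, u i * G i (col c) = 0).card
        = ∑ G : Matrix (Fin x) (Fin x) F, (S.filter fun u =>
            ∀ c : Fin kf, ∑ i, u i * G i (col c) = 0).card := by
      simp_rw [Finset.card_filter]
      exact Finset.sum_comm
    rw [swap]
    have step : ∀ G ∈ Bad, (q - 1) ≤ (S.filter fun u =>
        ∀ c : Fin kf, ∑ i, u i * G i (col c) = 0).card := by
      intro G hGBad
      have hG : ¬ ((encER hkfx G Cbar).submatrix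
          (Subtype.val : ↥A → Fin x ⊕ Fin y) id).rank = A.card := by
        simpa [hBad] using hGBad
      obtain ⟨u₀, ⟨hu₀W, hu₀0⟩, hu₀⟩ := hbad G hG
      have hcard := Finset.card_le_card_of_injOn (f := fun t : F => t • u₀)
        (s := (Finset.univ : Finset F).erase 0)
        (t := S.filter fun u => ∀ c : Fin kf, ∑ i, u i * G i (col c) = 0)
        ?_ ?_
      · rw [Finset.card_erase_of_mem (Finset.mem_univ _), Finset.card_univ] at hcard
        rw [hq]
        exact hcard
      · intro t ht
        have ht0 : t ≠ 0 := (Finset.mem_erase.mp ht).1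
        refine Finset.mem_filter.mpr ⟨?_, ?_⟩
        · rw [hS]
          exact Finset.mem_filter.mpr
            ⟨Finset.mem_univ _, W.smul_mem t hu₀W, smul_ne_zero ht0 hu₀0⟩
        intro c
        have := hu₀ c
        calc ∑ i, (t • u₀) i * G i (col c) = t * ∑ i, u₀ i * G i (col c) := by
              rw [Finset.mul_sum]
              apply Finset.sum_congr rfl
              intro i _
              simp [mul_assoc]
          _ = 0 := by rw [this, mul_zero]
      · intro t _ s _ hts
        obtain ⟨i, hi⟩ := Function.ne_iff.mp hu₀0
        have := congrFun hts i
        simp only [Pi.smul_apply, smul_eq_mul] at this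
        exact mul_right_cancel₀ hi this
    calc Bad.card * (q - 1) = ∑ _G ∈ Bad, (q - 1) := by
          rw [Finset.sum_const, smul_eq_mul]
      _ ≤ ∑ G ∈ Bad, (S.filter fun u =>
            ∀ c : Fin kf, ∑ i, u i * G i (col c) = 0).card := Finset.sum_le_sum step
      _ ≤ ∑ G : Matrix (Fin x) (Fin x) F, (S.filter fun u =>
            ∀ c : Fin kf, ∑ i, u i * G i (col c) = 0).card :=
          Finset.sum_le_sum_of_subset (Finset.subset_univ Bad)
  have sumZ : ∑ u ∈ S, (Finset.univ.filter fun G : Matrix (Fin x) (Fin x) F =>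
        ∀ c : Fin kf, ∑ i, u i * G i (col c) = 0).card
      ≤ (q ^ kf - 1) * ((q ^ (x-1)) ^ kf * (q ^ x) ^ (x - kf)) := by
    calc ∑ u ∈ S, (Finset.univ.filter fun G : Matrix (Fin x) (Fin x) F =>
          ∀ c : Fin kf, ∑ i, u i * G i (col c) = 0).card
        = ∑ _u ∈ S, ((q ^ (x-1)) ^ kf * (q ^ x) ^ (x - kf)) := by
          apply Finset.sum_congr rfl
          intro u hu
          rw [hS] at hu
          exact hZ u (Finset.mem_filter.mp hu).2.2
      _ = S.card * ((q ^ (x-1)) ^ kf * (q ^ x) ^ (x - kf)) := by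
          rw [Finset.sum_const, smul_eq_mul]
      _ ≤ (q ^ kf - 1) * ((q ^ (x-1)) ^ kf * (q ^ x) ^ (x - kf)) :=
          Nat.mul_le_mul_right _ (by clear * - hcardS; omega)
  have hgeom : q ^ kf - 1 ≤ kf * q ^ (kf - 1) * (q - 1) := by
    have h := geom_bound kf q (by clear * - hq2; omega)
    clear * - h
    omega
  have main : Bad.card * (q - 1)
      ≤ (kf * q ^ (kf - 1) * (q - 1)) * ((q ^ (x-1)) ^ kf * (q ^ x) ^ (x - kf)) :=
    le_trans key (le_trans sumZ (Nat.mul_le_mul_right _ hgeom))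
  have hexp : q ^ (kf - 1) * ((q ^ (x-1)) ^ kf * (q ^ x) ^ (x - kf)) = q ^ (x*x - 1) := by
    rw [← pow_mul, ← pow_mul, ← pow_add, ← pow_add]
    congr 1
    exact exp_arith x kf hx hkf1 hkfx
  have main2 : Bad.card * (q - 1) ≤ (kf * q ^ (x*x - 1)) * (q - 1) := by
    calc Bad.card * (q - 1)
        ≤ (kf * q ^ (kf - 1) * (q - 1)) * ((q ^ (x-1)) ^ kf * (q ^ x) ^ (x - kf)) := main
      _ = (kf * (q ^ (kf - 1) * ((q ^ (x-1)) ^ kf * (q ^ x) ^ (x - kf)))) * (q - 1) := by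
          clear * -
          ring
      _ = (kf * q ^ (x*x - 1)) * (q - 1) := by rw [hexp]
  exact Nat.le_of_mul_le_mul_right main2 (by clear * - hq2; omega)
end Aux

/-- **Theorem 2 of the paper (security of the random code).**
With the cut matrix `C = [C'; I_y]`, a nonempty collection `𝒜` of wiretap row
sets, and a conforming matrix `C̄` whose bottom diagonal entries are nonzero
and whose submatrix `Ū_A` is rank-maximized for every `A ∈ 𝒜`, set
`k_f = max_{A∈𝒜}(|A| − rank Ū_A)` and assume `1 ≤ k_f ≤ x`.  For a uniformly
random `G ∈ F^{x×x}`, with probability at least `1 − |𝒜|·k_f·(x+y)/q` every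
submatrix `E^r_A` of the last `k_f + y` columns of the encoder has full row
rank `|A|`. -/
theorem random_code_secure_whp
    {x y q kf : ℕ} (hx : 0 < x) (hy : 0 < y)
    (F : Type) [Field F] [Fintype F] [DecidableEq F]
    (hFq : Fintype.card F = q)
    (C' : Matrix (Fin x) (Fin y) Bool)
    (𝒜 : Finset (Finset (Fin x ⊕ Fin y))) (h𝒜 : 𝒜.Nonempty)
    (Cbar : Matrix (Fin x ⊕ Fin y) (Fin y) F)
    (hconf : Conforms Cbar (stackC C'))
    (hdiag : ∀ j : Fin y, Cbar (Sum.inr j) j ≠ 0)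
    (hmax : ∀ A ∈ 𝒜, ∀ V : Matrix ↥A (Fin y) F,
        Conforms V ((stackC C').submatrix (Subtype.val : ↥A → Fin x ⊕ Fin y) id) →
        V.rank ≤ (Cbar.submatrix (Subtype.val : ↥A → Fin x ⊕ Fin y) id).rank)
    (hkf : kf = 𝒜.sup fun A =>
        A.card - (Cbar.submatrix (Subtype.val : ↥A → Fin x ⊕ Fin y) id).rank)
    (hkf1 : 1 ≤ kf) (hkfx : kf ≤ x) :
    ((Finset.univ.filter fun G : Matrix (Fin x) (Fin x) F =>
        ∀ A ∈ 𝒜,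
          ((encER hkfx G Cbar).submatrix
            (Subtype.val : ↥A → Fin x ⊕ Fin y) id).rank = A.card).card : ℝ) /
        (Fintype.card (Matrix (Fin x) (Fin x) F) : ℝ)
      ≥ 1 - ((𝒜.card : ℝ) * (kf : ℝ) * ((x : ℝ) + (y : ℝ))) / (q : ℝ) := by
  have hq2 : 2 ≤ q := hFq ▸ Fintype.one_lt_card
  have hxx1 : 1 ≤ x * x := by
    calc 1 = 1 * 1 := (one_mul 1).symm
      _ ≤ x * x := Nat.mul_le_mul hx hx
  -- per-wiretap-set bad count
  have hbadA : ∀ A ∈ 𝒜, (Finset.univ.filter fun G : Matrix (Fin x) (Fin x) F =>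
      ¬ ((encER hkfx G Cbar).submatrix
          (Subtype.val : ↥A → Fin x ⊕ Fin y) id).rank = A.card).card
      ≤ kf * q ^ (x * x - 1) := by
    intro A hA
    have hAb : A.card - (Cbar.submatrix
        (Subtype.val : ↥A → Fin x ⊕ Fin y) id).rank ≤ kf := by
      rw [hkf]
      exact Finset.le_sup (f := fun A : Finset (Fin x ⊕ Fin y) =>
        A.card - (Cbar.submatrix (Subtype.val : ↥A → Fin x ⊕ Fin y) id).rank) hA
    have := bad_count hx hkf1 hkfx Cbar C' hconf hdiag A hAb
    rwa [hFq] at this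
  -- complement decomposition
  have hcompl := Finset.card_filter_add_card_filter_not
    (s := (Finset.univ : Finset (Matrix (Fin x) (Fin x) F)))
    (p := fun G => ∀ A ∈ 𝒜, ((encER hkfx G Cbar).submatrix
      (Subtype.val : ↥A → Fin x ⊕ Fin y) id).rank = A.card)
  have hsub : (Finset.univ.filter fun G : Matrix (Fin x) (Fin x) F =>
      ¬ ∀ A ∈ 𝒜, ((encER hkfx G Cbar).submatrix
        (Subtype.val : ↥A → Fin x ⊕ Fin y) id).rank = A.card)
      ⊆ 𝒜.biUnion fun A => Finset.univ.filter fun G : Matrix (Fin x) (Fin x) F =>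
        ¬ ((encER hkfx G Cbar).submatrix
          (Subtype.val : ↥A → Fin x ⊕ Fin y) id).rank = A.card := by
    intro G hG
    rw [Finset.mem_filter] at hG
    have hG2 := hG.2
    push_neg at hG2
    obtain ⟨A, hA, hne⟩ := hG2
    exact Finset.mem_biUnion.mpr ⟨A, hA, Finset.mem_filter.mpr ⟨Finset.mem_univ _, hne⟩⟩
  have hbadtot : (Finset.univ.filter fun G : Matrix (Fin x) (Fin x) F =>
      ¬ ∀ A ∈ 𝒜, ((encER hkfx G Cbar).submatrix
        (Subtype.val : ↥A → Fin x ⊕ Fin y) id).rank = A.card).card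
      ≤ 𝒜.card * (kf * q ^ (x * x - 1)) := by
    refine le_trans (Finset.card_le_card hsub) (le_trans Finset.card_biUnion_le ?_)
    have := Finset.sum_le_card_nsmul 𝒜 _ (kf * q ^ (x * x - 1)) (fun A hA => hbadA A hA)
    simpa using this
  have hNcard : Fintype.card (Matrix (Fin x) (Fin x) F) = q ^ (x * x) := by
    calc Fintype.card (Matrix (Fin x) (Fin x) F)
        = Fintype.card (Fin x → Fin x → F) := rfl
      _ = (Fintype.card F ^ x) ^ x := by simp [Fintype.card_fun]
      _ = q ^ (x * x) := by rw [hFq, ← pow_mul]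
  rw [Finset.card_univ, hNcard] at hcompl
  -- pass to the reals
  set g : ℕ := (Finset.univ.filter fun G : Matrix (Fin x) (Fin x) F =>
      ∀ A ∈ 𝒜, ((encER hkfx G Cbar).submatrix
        (Subtype.val : ↥A → Fin x ⊕ Fin y) id).rank = A.card).card with hg
  rw [ge_iff_le, hNcard, Nat.cast_pow]
  have hq0 : (0:ℝ) < (q:ℝ) := by
    have : (0:ℕ) < q := by omega
    exact_mod_cast this
  have hqp0 : (0:ℝ) < (q:ℝ) ^ (x * x) := by positivity
  have hNsplit : (q:ℝ) ^ (x * x) = (q:ℝ) ^ (x * x - 1) * (q:ℝ) := by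
    rw [← pow_succ]
    congr 1
    omega
  have hnat : q ^ (x * x) ≤ g + 𝒜.card * (kf * q ^ (x * x - 1)) := by omega
  have hcast : ((q:ℝ)) ^ (x * x)
      ≤ (g:ℝ) + ((𝒜.card:ℝ) * (kf:ℝ)) * (q:ℝ) ^ (x * x - 1) := by
    have := (Nat.cast_le (α := ℝ)).mpr hnat
    push_cast at this
    linarith
  have hmono : ((𝒜.card:ℝ) * (kf:ℝ)) / (q:ℝ)
      ≤ ((𝒜.card:ℝ) * (kf:ℝ) * ((x:ℝ) + (y:ℝ))) / (q:ℝ) := by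
    have hxy : (1:ℝ) ≤ (x:ℝ) + (y:ℝ) := by
      have hx' : (1:ℝ) ≤ (x:ℝ) := by exact_mod_cast hx
      have hy' : (0:ℝ) ≤ (y:ℝ) := by positivity
      linarith
    have hD : (0:ℝ) ≤ (𝒜.card:ℝ) * (kf:ℝ) := by positivity
    exact (div_le_div_iff_of_pos_right hq0).mpr (by nlinarith)
  have hmain : (1:ℝ) - ((𝒜.card:ℝ) * (kf:ℝ)) / (q:ℝ)
      ≤ (g:ℝ) / (q:ℝ) ^ (x * x) := by
    rw [le_div_iff₀ hqp0]
    have expand : ((1:ℝ) - ((𝒜.card:ℝ) * (kf:ℝ)) / (q:ℝ)) * ((q:ℝ) ^ (x * x))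
        = (q:ℝ) ^ (x * x) - ((𝒜.card:ℝ) * (kf:ℝ)) * (q:ℝ) ^ (x * x - 1) := by
      rw [hNsplit]
      field_simp
    rw [expand]
    linarith
  linarith
end

section
/- Let q be a prime power and let x, y be positive integers. Let C' ∈ {0,1}^{x×y}, let C be the (x+y)×y 0-1 matrix obtained by stacking C' on top of the y×y identity matrix I_y, and let 𝒜 be a nonempty finite collection of subsets of the row set {1,…,x+y}. Let C̄ ∈ F_q^{(x+y)×y} be a matrix conforming to C such that every diagonal entry of its bottom y×y block is nonzero and such that for every A ∈ 𝒜 the submatrix Ū_A of C̄ on the rows in A has rank equal to the maximal rank over all matrices conforming to U_A (the submatrix of C on rows A). Set k_f = max_{A∈𝒜} (|A| − rank(Ū_A)) and assume 1 ≤ k_f ≤ x. If q > |𝒜|·k_f·(x+y), then there exists a matrix G ∈ F_q^{x×x} such that, with E the (x+y)×(x+y) matrix whose first x columns are G stacked on the y×x zero matrix and whose last y columns are C̄, and E^r the matrix of the last k_f + y columns of E, the submatrix E^r_A has full row rank |A| for every A ∈ 𝒜. -/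
open scoped Classical

open Matrix

open Module Submodule in
lemma secure_aux_exists_w {ι : Type*} [Fintype ι] {y kf : ℕ} {F : Type} [Field F]
    (v : ι → Fin y → F) (P : ι → Prop)
    (h1 : LinearIndependent F (fun a : {a // P a} => v a.val))
    (h2 : Fintype.card ι ≤ kf + Module.finrank F (Submodule.span F (Set.range v))) :
    ∃ w : ι → Fin kf → F, (∀ a, P a → w a = 0) ∧
      LinearIndependent F (fun a : ι => (Sum.elim (w a) (v a) : Fin kf ⊕ Fin y → F)) := by
  classical
  set s : Set (Fin y → F) := Set.range (fun a : {a // P a} => v a.val) with hs_def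
  set t : Set (Fin y → F) := Set.range v with ht_def
  have hst : s ⊆ t := by rintro _ ⟨a, rfl⟩; exact ⟨a.val, rfl⟩
  have h1' : LinearIndependent F ((↑) : s → (Fin y → F)) := (linearIndepOn_id_range_iff h1.injective).mpr h1
  obtain ⟨b, hbt, hsb, htb, hb⟩ := (exists_linearIndepOn_id_extension h1' hst :
    ∃ b ⊆ t, s ⊆ b ∧ t ⊆ Submodule.span F b ∧ LinearIndependent F ((↑) : b → (Fin y → F)))
  have htfin : t.Finite := Set.finite_range v
  have hbfin : b.Finite := htfin.subset hbt
  haveI : Fintype b := hbfin.fintype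
  have pick : ∀ u ∈ b, ∃ a : ι, v a = u := by
    intro u hu; rcases hbt hu with ⟨a, ha⟩; exact ⟨a, ha⟩
  choose g hg using pick
  -- the index set S
  let S : Finset ι :=
    Finset.univ.filter (fun a => P a ∨ ∃ h : v a ∈ b, v a ∉ s ∧ g (v a) h = a)
  have hvSb : ∀ a ∈ S, v a ∈ b := by
    intro a ha
    rcases Finset.mem_filter.mp ha with ⟨-, hPa | ⟨hb', -, -⟩⟩
    · exact hsb ⟨⟨a, hPa⟩, rfl⟩
    · exact hb'
  have hvS_inj : ∀ a₁ ∈ S, ∀ a₂ ∈ S, v a₁ = v a₂ → a₁ = a₂ := by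
    intro a₁ ha₁ a₂ ha₂ hv
    rcases Finset.mem_filter.mp ha₁ with ⟨-, hP1 | ⟨hb1, hns1, hg1⟩⟩ <;>
      rcases Finset.mem_filter.mp ha₂ with ⟨-, hP2 | ⟨hb2, hns2, hg2⟩⟩
    · have := h1.injective (a₁ := ⟨a₁, hP1⟩) (a₂ := ⟨a₂, hP2⟩) hv
      exact congrArg Subtype.val this
    · exact absurd (hv ▸ ⟨⟨a₁, hP1⟩, rfl⟩ : v a₂ ∈ s) hns2
    · exact absurd (hv ▸ ⟨⟨a₂, hP2⟩, rfl⟩ : v a₁ ∈ s) hns1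
    · rw [← hg1, ← hg2]; congr 1
  -- surjectivity of v : S → b
  have hvS_surj : ∀ u ∈ b, ∃ a ∈ S, v a = u := by
    intro u hu
    by_cases hus : u ∈ s
    · rcases hus with ⟨⟨a, hPa⟩, rfl⟩
      exact ⟨a, Finset.mem_filter.mpr ⟨Finset.mem_univ _, Or.inl hPa⟩, rfl⟩
    · refine ⟨g u hu, Finset.mem_filter.mpr ⟨Finset.mem_univ _, Or.inr ?_⟩, hg u hu⟩
      have hvg : v (g u hu) = u := hg u hu
      simp only [hvg]
      exact ⟨hu, hus, trivial⟩
  -- card of b = card of S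
  have hcard_bS : S.card = hbfin.toFinset.card := by
    refine Finset.card_bij (fun a _ => v a) ?_ ?_ ?_
    · intro a ha; simpa using hvSb a ha
    · exact hvS_inj
    · intro u hu
      rcases hvS_surj u (by simpa using hu) with ⟨a, ha, hva⟩
      exact ⟨a, ha, hva⟩
  -- dimension count
  have hrank : Module.finrank F (Submodule.span F t) ≤ S.card := by
    have hspan : Submodule.span F t ≤ Submodule.span F b :=
      Submodule.span_le.mpr htb
    have h1 : Module.finrank F (Submodule.span F t) ≤ Module.finrank F (Submodule.span F b) := by
      haveI : Module.Finite F (Submodule.span F b) := by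
        apply FiniteDimensional.span_of_finite
        exact hbfin
      exact Submodule.finrank_mono hspan
    have h2 : Module.finrank F (Submodule.span F b) ≤ b.toFinset.card :=
      finrank_span_le_card (R := F) b
    have h4 : hbfin.toFinset.card = b.toFinset.card := by
      congr 1
      exact Set.Finite.toFinset_eq_toFinset hbfin
    omega
  have hcardS : Fintype.card ι ≤ kf + S.card := le_trans h2 (by omega)
  -- the complement of S, and an injection into Fin kf
  have hTcard : Fintype.card {a : ι // a ∉ S} ≤ kf := by
    have h3 : Fintype.card {a : ι // a ∉ S} = Fintype.card ι - S.card := by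
      have := Finset.card_compl S
      simpa [Fintype.card_coe] using
        (Fintype.card_of_subtype Sᶜ (by simp) : Fintype.card {a : ι // a ∈ Sᶜ} = Sᶜ.card).trans this
    omega
  obtain ⟨π⟩ : Nonempty ({a : ι // a ∉ S} ↪ Fin kf) :=
    Function.Embedding.nonempty_of_card_le (by simpa using hTcard)
  -- the free part w
  refine ⟨fun a c => if h : a ∉ S then (if π ⟨a, h⟩ = c then 1 else 0) else 0, ?_, ?_⟩
  · intro a hPa
    have haS : a ∈ S := Finset.mem_filter.mpr ⟨Finset.mem_univ _, Or.inl hPa⟩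
    funext c; simp [haS]
  · rw [Fintype.linearIndependent_iff]
    intro gc hsum
    have hg0 : ∀ a ∉ S, gc a = 0 := by
      intro a ha
      have h0 := congrFun hsum (Sum.inl (π ⟨a, ha⟩))
      rw [Finset.sum_apply] at h0
      simp only [Pi.smul_apply, Sum.elim_inl, Pi.zero_apply, smul_eq_mul] at h0
      rw [Finset.sum_eq_single a] at h0
      · simpa [ha] using h0
      · intro a' _ hne
        by_cases ha' : a' ∉ S
        · have : π ⟨a', ha'⟩ ≠ π ⟨a, ha⟩ := by
            intro hcontr
            exact hne (congrArg Subtype.val (π.injective hcontr))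
          simp [ha', this]
        · simp [ha']
      · intro h; exact absurd (Finset.mem_univ a) h
    have hvsum : ∑ a ∈ S, gc a • v a = 0 := by
      have h0 : ∑ a : ι, gc a • v a = 0 := by
        funext j
        have h0 := congrFun hsum (Sum.inr j)
        rw [Finset.sum_apply] at h0
        simpa [Finset.sum_apply] using h0
      have := Finset.sum_subset (f := fun a => gc a • v a) (Finset.subset_univ S)
        (fun a _ ha => by show gc a • v a = 0; rw [hg0 a ha, zero_smul])
      rw [← h0]
      exact this
    -- independence of v on S
    have hindS : LinearIndependent F (fun a : {a : ι // a ∈ S} => v a.val) := by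
      have hm_inj : Function.Injective
          (fun a : {a : ι // a ∈ S} => (⟨v a.val, hvSb a.val a.property⟩ : b)) := by
        intro a₁ a₂ h12
        exact Subtype.ext (hvS_inj _ a₁.property _ a₂.property (congrArg Subtype.val h12))
      exact hb.comp _ hm_inj
    have hgS : ∀ a ∈ S, gc a = 0 := by
      have := Fintype.linearIndependent_iff.mp hindS (fun a => gc a.val) ?_
      · intro a ha; exact this ⟨a, ha⟩
      · rw [← Finset.sum_coe_sort S (fun a => gc a • v a)] at hvsum
        exact hvsum
    intro a
    by_cases ha : a ∈ S
    · exact hgS a ha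
    · exact hg0 a ha

open Module Submodule in
lemma secure_aux_exists_cols {ι κ : Type*} [Fintype ι] [Fintype κ] [DecidableEq ι] {F : Type}
    [Field F] (M : Matrix ι κ F) (h : LinearIndependent F (fun a : ι => M a)) :
    ∃ f : ι → κ, Function.Injective f ∧ (M.submatrix id f).det ≠ 0 := by
  classical
  -- the columns of M span everything
  have hrank : M.rank = Fintype.card ι := by
    rw [← Matrix.rank_transpose, Matrix.rank_eq_finrank_span_cols, Matrix.col_transpose]
    exact finrank_span_eq_card h
  have hspan : Submodule.span F (Set.range Mᵀ) = ⊤ := by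
    apply Submodule.eq_top_of_finrank_eq
    rw [show Set.range Mᵀ = Set.range M.col from rfl, ← Matrix.rank_eq_finrank_span_cols, hrank,
      Module.finrank_pi]
  obtain ⟨b, hbr, hbspan, hb⟩ := exists_linearIndependent F (Set.range Mᵀ)
  rw [hspan] at hbspan
  have hbfin : b.Finite := (Set.finite_range Mᵀ).subset hbr
  haveI : Fintype b := hbfin.fintype
  have hbcard : b.toFinset.card = Fintype.card ι := by
    have h1 : Module.finrank F (Submodule.span F b) = b.toFinset.card :=
      finrank_span_set_eq_card hb
    rw [hbspan, finrank_top, Module.finrank_pi] at h1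
    omega
  have hcards : Fintype.card ι = Fintype.card b := by
    rw [← hbcard, Set.toFinset_card]
  let e : ι ≃ b := Fintype.equivOfCardEq hcards
  have pick : ∀ u : b, ∃ c : κ, Mᵀ c = u.val := fun u => hbr u.property
  choose g hg using pick
  refine ⟨fun a => g (e a), ?_, ?_⟩
  · intro a₁ a₂ h12
    apply e.injective
    apply Subtype.ext
    rw [← hg (e a₁), ← hg (e a₂)]
    exact congrArg _ h12
  · set Q := M.submatrix id (fun a => g (e a)) with hQ
    have hcols : LinearIndependent F (fun a : ι => Qᵀ a) := by
      have : (fun a : ι => Qᵀ a) = (fun u : b => (u : ι → F)) ∘ e := by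
        funext a
        have : Qᵀ a = Mᵀ (g (e a)) := rfl
        rw [this, hg (e a)]
        rfl
      rw [this]
      exact hb.comp e e.injective
    have hunit : IsUnit Q := Matrix.linearIndependent_cols_iff_isUnit.mp hcols
    have := (Matrix.isUnit_iff_isUnit_det Q).mp hunit
    exact this.ne_zero

lemma secure_aux_totalDegree_det_le {n σ R : Type*} [Fintype n] [DecidableEq n] [CommRing R]
    (M : Matrix n n (MvPolynomial σ R)) (h : ∀ i j, (M i j).totalDegree ≤ 1) :
    M.det.totalDegree ≤ Fintype.card n := by
  classical
  rw [Matrix.det_apply]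
  refine le_trans (MvPolynomial.totalDegree_finset_sum _ _) ?_
  apply Finset.sup_le
  intro σ' _
  have hprod : (∏ i, M (σ' i) i).totalDegree ≤ Fintype.card n := by
    refine le_trans (MvPolynomial.totalDegree_finset_prod _ _) ?_
    calc ∑ i, (M (σ' i) i).totalDegree ≤ ∑ _i : n, 1 :=
          Finset.sum_le_sum (fun i _ => h (σ' i) i)
      _ = Fintype.card n := by simp
  rcases Int.units_eq_one_or (Equiv.Perm.sign σ') with hs | hs <;> rw [hs]
  · simpa using hprod
  · rw [Units.neg_smul, one_smul, MvPolynomial.totalDegree_neg]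
    exact hprod

open Module Submodule in
lemma secure_aux_card_le_rank {ι κ : Type*} [Fintype ι] [Fintype κ] [DecidableEq ι] {F : Type}
    [Field F] (M : Matrix ι κ F) (f : ι → κ) (hdet : (M.submatrix id f).det ≠ 0) :
    Fintype.card ι ≤ M.rank := by
  classical
  set Q := M.submatrix id f with hQdef
  have hQu : IsUnit Q := (Matrix.isUnit_iff_isUnit_det Q).mpr (isUnit_iff_ne_zero.mpr hdet)
  have h1 : Q.rank = Fintype.card ι := Matrix.rank_of_isUnit Q hQu
  have h2 : Q.rank ≤ M.rank := by
    rw [Matrix.rank_eq_finrank_span_cols, Matrix.rank_eq_finrank_span_cols]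
    haveI : Module.Finite F (span F (Set.range Mᵀ)) :=
      FiniteDimensional.span_of_finite F (Set.finite_range _)
    apply Submodule.finrank_mono
    apply Submodule.span_mono
    rintro _ ⟨a, rfl⟩
    exact ⟨f a, rfl⟩
  omega

/-- **Existence of a secure scalar linear code.**
With the cut matrix `C = [C'; I_y]`, a nonempty collection `𝒜` of wiretap row
sets, and a conforming matrix `C̄` whose bottom diagonal entries are nonzero
and whose submatrix `Ū_A` is rank-maximized for every `A ∈ 𝒜`, set
`k_f = max_{A∈𝒜}(|A| − rank Ū_A)` and assume `1 ≤ k_f ≤ x`.  If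
`q > |𝒜|·k_f·(x+y)`, then there exists `G ∈ F^{x×x}` such that every submatrix
`E^r_A` of the last `k_f + y` columns of the encoder has full row rank `|A|`. -/
theorem exists_secure_code
    {x y q kf : ℕ} (hx : 0 < x) (hy : 0 < y)
    (F : Type) [Field F] [Fintype F] [DecidableEq F]
    (hFq : Fintype.card F = q)
    (C' : Matrix (Fin x) (Fin y) Bool)
    (𝒜 : Finset (Finset (Fin x ⊕ Fin y))) (h𝒜 : 𝒜.Nonempty)
    (Cbar : Matrix (Fin x ⊕ Fin y) (Fin y) F)
    (hconf : Conforms Cbar (stackC C'))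
    (hdiag : ∀ j : Fin y, Cbar (Sum.inr j) j ≠ 0)
    (hmax : ∀ A ∈ 𝒜, ∀ V : Matrix ↥A (Fin y) F,
        Conforms V ((stackC C').submatrix (Subtype.val : ↥A → Fin x ⊕ Fin y) id) →
        V.rank ≤ (Cbar.submatrix (Subtype.val : ↥A → Fin x ⊕ Fin y) id).rank)
    (hkf : kf = 𝒜.sup fun A =>
        A.card - (Cbar.submatrix (Subtype.val : ↥A → Fin x ⊕ Fin y) id).rank)
    (hkf1 : 1 ≤ kf) (hkfx : kf ≤ x)
    (hq : 𝒜.card * kf * (x + y) < q) :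
    ∃ G : Matrix (Fin x) (Fin x) F,
      ∀ A ∈ 𝒜,
        ((encER hkfx G Cbar).submatrix
          (Subtype.val : ↥A → Fin x ⊕ Fin y) id).rank = A.card := by
  classical
  -- the matrix `G` associated to an assignment of the `x × kf` free block
  set Gm : ((Fin x × Fin kf) → F) → Matrix (Fin x) (Fin x) F := fun w =>
    Matrix.of fun i j =>
      if h : x - kf ≤ j.val then w (i, ⟨j.val - (x - kf), by have := j.isLt; omega⟩) else 0
    with hGm_def
  have hGm : ∀ (w : (Fin x × Fin kf) → F) (i : Fin x) (c : Fin kf),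
      Gm w i ⟨x - kf + c.val, by have := c.isLt; omega⟩ = w (i, c) := by
    intro w i c
    have h : x - kf ≤ x - kf + c.val := Nat.le_add_right _ _
    have hc : (⟨x - kf + c.val - (x - kf), by have := c.isLt; omega⟩ : Fin kf) = c :=
      Fin.ext (show x - kf + c.val - (x - kf) = c.val by omega)
    simp only [hGm_def, Matrix.of_apply, dif_pos h, hc]
  -- the symbolic matrix attached to a wiretap set
  set N : (A : Finset (Fin x ⊕ Fin y)) →
      Matrix ↥A (Fin kf ⊕ Fin y) (MvPolynomial (Fin x × Fin kf) F) := fun A =>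
    Matrix.of fun a ci =>
      match ci with
      | Sum.inl c =>
          match a.val with
          | Sum.inl i => MvPolynomial.X (i, c)
          | Sum.inr _ => 0
      | Sum.inr c => MvPolynomial.C (Cbar a.val c)
    with hN_def
  -- evaluation of the symbolic matrix
  have hN_eval : ∀ (A : Finset (Fin x ⊕ Fin y)) (w : Fin x × Fin kf → F),
      (N A).map (MvPolynomial.eval w) =
        (encER hkfx (Gm w) Cbar).submatrix (Subtype.val : ↥A → _) id := by
    intro A w
    ext a ci
    rcases a with ⟨z, hz⟩
    cases ci with
    | inl c =>
      cases z with
      | inl i =>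
        simp only [hN_def, Matrix.map_apply, Matrix.of_apply, MvPolynomial.eval_X,
          Matrix.submatrix_apply, id_eq, encER]
        exact (hGm w i c).symm
      | inr j =>
        simp only [hN_def, Matrix.map_apply, Matrix.of_apply,
          Matrix.submatrix_apply, id_eq, encER, map_zero]
    | inr c =>
      simp only [hN_def, Matrix.map_apply, Matrix.of_apply, MvPolynomial.eval_C,
        Matrix.submatrix_apply, id_eq, encER]
  -- commuting evaluation with determinants of column selections
  have hswap : ∀ (A : Finset (Fin x ⊕ Fin y)) (w : Fin x × Fin kf → F)
      (g : ↥A → Fin kf ⊕ Fin y),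
      (((N A).map (MvPolynomial.eval w)).submatrix id g).det =
        MvPolynomial.eval w (((N A).submatrix id g).det) := by
    intro A w g
    rw [RingHom.map_det]
    rfl
  -- the key per-wiretap-set existence of a good column choice
  have key : ∀ A ∈ 𝒜, ∃ f : ↥A → (Fin kf ⊕ Fin y), Function.Injective f ∧
      ((N A).submatrix id f).det ≠ 0 := by
    intro A hA
    set v : ↥A → Fin y → F := fun a => Cbar a.val with hv_def
    set P : ↥A → Prop := fun a => ∃ j : Fin y, a.val = Sum.inr j with hP_def
    -- independence of the backward rows
    have hP : LinearIndependent F (fun a : {a : ↥A // P a} => v a.val) := by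
      rw [Fintype.linearIndependent_iff]
      intro gc hsum a₀
      obtain ⟨j₀, hj₀⟩ := a₀.property
      have h0 := congrFun hsum j₀
      rw [Finset.sum_apply] at h0
      simp only [Pi.smul_apply, smul_eq_mul, Pi.zero_apply] at h0
      rw [Finset.sum_eq_single a₀] at h0
      · have : v a₀.val j₀ ≠ 0 := by
          rw [hv_def]; simp only []
          rw [hj₀]; exact hdiag j₀
        rcases mul_eq_zero.mp h0 with h | h
        · exact h
        · exact absurd h this
      · intro a _ hne
        obtain ⟨j, hj⟩ := a.property
        have hjj : j ≠ j₀ := by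
          intro hcontr
          apply hne
          apply Subtype.ext; apply Subtype.ext
          rw [hj, hj₀, hcontr]
        have : v a.val j₀ = 0 := by
          rw [hv_def]; simp only []
          rw [hj]
          apply hconf
          simp only [stackC, Matrix.of_apply]
          simp [hjj]
        rw [this, mul_zero]
      · intro h; exact absurd (Finset.mem_univ a₀) h
    -- dimension count from the definition of `kf`
    have h2 : Fintype.card ↥A ≤ kf +
        Module.finrank F (Submodule.span F (Set.range v)) := by
      have hr : (Cbar.submatrix (Subtype.val : ↥A → _) id).rank =
          Module.finrank F (Submodule.span F (Set.range v)) := by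
        rw [← Matrix.rank_transpose, Matrix.rank_eq_finrank_span_cols,
          Matrix.col_transpose]
        rfl
      have hsup := Finset.le_sup (f := fun A : Finset (Fin x ⊕ Fin y) =>
        A.card - (Cbar.submatrix (Subtype.val : ↥A → _) id).rank) hA
      rw [← hkf] at hsup
      have hsup' : A.card - (Cbar.submatrix (Subtype.val : ↥A → _) id).rank ≤ kf := hsup
      rw [hr] at hsup'
      rw [Fintype.card_coe]
      omega
    obtain ⟨w, hw0, hindep⟩ := secure_aux_exists_w v P hP h2
    -- assemble a concrete assignment realizing these rows
    set wf : Fin x × Fin kf → F := fun p =>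
      if h : Sum.inl p.1 ∈ A then w ⟨Sum.inl p.1, h⟩ p.2 else 0 with hwf_def
    have hrows : (fun a : ↥A => ((N A).map (MvPolynomial.eval wf)) a) =
        (fun a : ↥A => (Sum.elim (w a) (v a) : Fin kf ⊕ Fin y → F)) := by
      funext a
      funext ci
      rcases a with ⟨z, hz⟩
      cases ci with
      | inl c =>
        cases z with
        | inl i =>
          simp only [hN_def, Matrix.map_apply, Matrix.of_apply, MvPolynomial.eval_X,
            Sum.elim_inl]
          rw [hwf_def]
          simp only [dif_pos hz]
        | inr j =>
          simp only [hN_def, Matrix.map_apply, Matrix.of_apply, map_zero, Sum.elim_inl]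
          rw [hw0 ⟨Sum.inr j, hz⟩ ⟨j, rfl⟩]
          rfl
      | inr c =>
        simp only [hN_def, Matrix.map_apply, Matrix.of_apply, MvPolynomial.eval_C,
          Sum.elim_inr]
        rfl
    have hli : LinearIndependent F (fun a : ↥A => ((N A).map (MvPolynomial.eval wf)) a) := by
      rw [hrows]; exact hindep
    obtain ⟨f, hfinj, hdet⟩ := secure_aux_exists_cols _ hli
    refine ⟨f, hfinj, fun h0 => hdet ?_⟩
    rw [hswap A wf f, h0, map_zero]
  choose f hfinj hfdet using key
  -- the product polynomial
  set p : ↥𝒜 → MvPolynomial (Fin x × Fin kf) F := fun A =>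
    ((N A.val).submatrix id (f A.val A.property)).det with hp_def
  have hpne : ∀ A : ↥𝒜, p A ≠ 0 := fun A => hfdet A.val A.property
  have hAcardle : ∀ A : ↥𝒜, (A.val).card ≤ x + y := by
    intro A
    have := Finset.card_le_univ A.val
    simpa [Fintype.card_sum] using this
  have hpdeg : ∀ A : ↥𝒜, (p A).totalDegree ≤ x + y := by
    intro A
    refine le_trans (secure_aux_totalDegree_det_le _ ?_) ?_
    · intro a ci
      simp only [Matrix.submatrix_apply, hN_def, Matrix.of_apply, id_eq]
      rcases a with ⟨z, hz⟩
      cases f A.val A.property ci with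
      | inl c =>
        cases z with
        | inl i => simp [MvPolynomial.totalDegree_X]
        | inr j => simp
      | inr c => simp [MvPolynomial.totalDegree_C]
    · rw [Fintype.card_coe]
      exact hAcardle A
  set Pprod : MvPolynomial (Fin x × Fin kf) F := ∏ A : ↥𝒜, p A with hPprod_def
  have hPne : Pprod ≠ 0 := by
    rw [hPprod_def]
    rw [Finset.prod_ne_zero_iff]
    intro A _; exact hpne A
  have hPdeg : Pprod.totalDegree ≤ 𝒜.card * (x + y) := by
    refine le_trans (MvPolynomial.totalDegree_finset_prod _ _) ?_
    calc ∑ A : ↥𝒜, (p A).totalDegree ≤ ∑ _A : ↥𝒜, (x + y) :=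
          Finset.sum_le_sum (fun A _ => hpdeg A)
      _ = 𝒜.card * (x + y) := by simp [Fintype.card_coe, Finset.sum_const, mul_comm]
  have hdeglt : 𝒜.card * (x + y) < q := by
    have h1 : 𝒜.card * (x + y) ≤ 𝒜.card * kf * (x + y) := by
      have := Nat.mul_le_mul_right (x + y) (Nat.mul_le_mul_left 𝒜.card hkf1)
      simpa [mul_one] using this
    omega
  -- Schwartz–Zippel style argument
  have hex : ∃ w : Fin x × Fin kf → F, MvPolynomial.eval w Pprod ≠ 0 := by
    by_contra hcon
    push_neg at hcon
    apply hPne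
    apply MvPolynomial.eq_zero_of_eval_eq_zero (σ := Fin x × Fin kf) (K := F) Pprod hcon
    rw [MvPolynomial.mem_restrictDegree_iff_sup]
    intro i
    have h1 : Pprod.degreeOf i ≤ Pprod.totalDegree := MvPolynomial.degreeOf_le_totalDegree _ _
    have h2 : Pprod.degreeOf i = Pprod.degrees.count i := MvPolynomial.degreeOf_def _ _
    rw [← h2]
    omega
  obtain ⟨w, hw⟩ := hex
  refine ⟨Gm w, fun A hA => ?_⟩
  have hfac : MvPolynomial.eval w (p ⟨A, hA⟩) ≠ 0 := by
    intro h0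
    apply hw
    rw [hPprod_def, map_prod]
    exact Finset.prod_eq_zero (Finset.mem_univ (⟨A, hA⟩ : ↥𝒜)) h0
  have hdet : (((encER hkfx (Gm w) Cbar).submatrix (Subtype.val : ↥A → _) id).submatrix
      id (f A hA)).det ≠ 0 := by
    rw [← hN_eval A w, hswap A w (f A hA)]
    exact hfac
  refine le_antisymm ?_ ?_
  · have := Matrix.rank_le_card_height ((encER hkfx (Gm w) Cbar).submatrix
      (Subtype.val : ↥A → _) id)
    simpa [Fintype.card_coe] using this
  · have := secure_aux_card_le_rank _ (f A hA) hdet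
    simpa [Fintype.card_coe] using this
end
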